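/- arXiv:1809.03856 — 4 statements merged into one kernel-verified Lean document; each statement's English description precedes it below -/
import Mathlib

section
/- Let n be a positive integer, let A₁, A₂ be n×n complex Hermitian matrices, b₁, b₂ ∈ ℂⁿ and c₁, c₂ ∈ ℝ, and for k = 1, 2 define fₖ(x) := xᴴAₖx + bₖᴴx + xᴴbₖ + cₖ (a real number for every x ∈ ℂⁿ). If there exists x̄ ∈ ℂⁿ with f₁(x̄) < 0, then the implication "for all x ∈ ℂⁿ, f₁(x) ≤ 0 implies f₂(x) ≤ 0" holds if and only if there exists η ≥ 0 such that the (n+1)×(n+1) block matrix η·[[A₁, b₁],[b₁ᴴ, c₁]] − [[A₂, b₂],[b₂ᴴ, c₂]] is positive semidefinite. -/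
open Matrix
open scoped ComplexOrder

/-- The real-valued quadratic function `f(x) = xᴴ A x + bᴴ x + xᴴ b + c`. -/
noncomputable def quadFun {n : ℕ} (A : Matrix (Fin n) (Fin n) ℂ) (b : Fin n → ℂ) (c : ℝ)
    (x : Fin n → ℂ) : ℝ :=
  (star x ⬝ᵥ A.mulVec x + star b ⬝ᵥ x + star x ⬝ᵥ b + (c : ℂ)).re

/-- The `(n+1) × (n+1)` block matrix `[[A, b], [bᴴ, c]]`. -/
noncomputable def blockMat {n : ℕ} (A : Matrix (Fin n) (Fin n) ℂ) (b : Fin n → ℂ) (c : ℝ) :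
    Matrix (Fin n ⊕ Unit) (Fin n ⊕ Unit) ℂ :=
  Matrix.fromBlocks A (fun i _ => b i) (fun _ j => star (b j)) (fun _ _ => (c : ℂ))


namespace SAux

variable {m : Type*} [Fintype m]

noncomputable def qf (M : Matrix m m ℂ) (v : m → ℂ) : ℝ := (star v ⬝ᵥ M.mulVec v).re

noncomputable def nsq (v : m → ℂ) : ℝ := (star v ⬝ᵥ v).re

lemma conj_form {M : Matrix m m ℂ} (h : M.IsHermitian) (v w : m → ℂ) :
    (starRingEnd ℂ) (star v ⬝ᵥ M.mulVec w) = star w ⬝ᵥ M.mulVec v := by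
  have h1 : star v ⬝ᵥ M.mulVec w = star (star (M.mulVec w) ⬝ᵥ v) := star_dotProduct _ _
  rw [h1]
  simp only [starRingEnd_apply, star_star]
  rw [star_mulVec, h.eq, ← dotProduct_mulVec]

lemma im_eq_zero {M : Matrix m m ℂ} (h : M.IsHermitian) (v : m → ℂ) :
    (star v ⬝ᵥ M.mulVec v).im = 0 :=
  Complex.conj_eq_iff_im.mp (conj_form h v v)

lemma nsq_nonneg (v : m → ℂ) : 0 ≤ nsq v :=
  (Complex.le_def.mp (dotProduct_star_self_nonneg v)).1

lemma nsq_pos {v : m → ℂ} (hv : v ≠ 0) : 0 < nsq v :=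
  (Complex.lt_def.mp (Matrix.dotProduct_star_self_pos_iff.mpr hv)).1

lemma qf_zero (M : Matrix m m ℂ) : qf M (0 : m → ℂ) = 0 := by simp [qf]

lemma qf_add_matrix (M N : Matrix m m ℂ) (v : m → ℂ) : qf (M + N) v = qf M v + qf N v := by
  simp [qf, add_mulVec, dotProduct_add]

lemma qf_sub_matrix (M N : Matrix m m ℂ) (v : m → ℂ) : qf (M - N) v = qf M v - qf N v := by
  simp [qf, sub_mulVec, dotProduct_sub]

lemma qf_smul_matrix (r : ℝ) (M : Matrix m m ℂ) (v : m → ℂ) :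
    qf ((r : ℂ) • M) v = r * qf M v := by
  simp [qf, smul_mulVec, dotProduct_smul, Complex.re_ofReal_mul]

lemma qf_one [DecidableEq m] (v : m → ℂ) : qf 1 v = nsq v := by
  simp [qf, nsq, one_mulVec]

lemma qf_smul_vec (M : Matrix m m ℂ) (a : ℂ) (v : m → ℂ) :
    qf M (a • v) = Complex.normSq a * qf M v := by
  rw [qf, star_smul, mulVec_smul, smul_dotProduct, dotProduct_smul, smul_smul,
    smul_eq_mul]
  have : star a * a = (Complex.normSq a : ℂ) := by
    rw [Complex.star_def, mul_comm, Complex.mul_conj]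
  rw [this, Complex.re_ofReal_mul, qf]

lemma nsq_smul_vec (a : ℂ) (v : m → ℂ) [DecidableEq m] :
    nsq (a • v) = Complex.normSq a * nsq v := by
  rw [← qf_one, ← qf_one, qf_smul_vec]

lemma qf_expand {M : Matrix m m ℂ} (h : M.IsHermitian) (a b : ℂ) (z w : m → ℂ) :
    qf M (a • z + b • w) = Complex.normSq a * qf M z + Complex.normSq b * qf M w
      + 2 * (starRingEnd ℂ a * b * (star z ⬝ᵥ M.mulVec w)).re := by
  have expand : star (a • z + b • w) ⬝ᵥ M.mulVec (a • z + b • w)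
      = ((Complex.normSq a : ℂ)) * (star z ⬝ᵥ M.mulVec z)
        + ((Complex.normSq b : ℂ)) * (star w ⬝ᵥ M.mulVec w)
        + ((starRingEnd ℂ a * b) * (star z ⬝ᵥ M.mulVec w)
          + starRingEnd ℂ ((starRingEnd ℂ a * b) * (star z ⬝ᵥ M.mulVec w))) := by
    rw [star_add, star_smul, star_smul, mulVec_add, mulVec_smul, mulVec_smul]
    simp only [add_dotProduct, dotProduct_add, smul_dotProduct, dotProduct_smul,
      smul_smul, smul_eq_mul, Complex.star_def]
    rw [map_mul (starRingEnd ℂ), conj_form h z w, map_mul (starRingEnd ℂ),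
      Complex.conj_conj]
    have hna : (Complex.normSq a : ℂ) = starRingEnd ℂ a * a := by
      rw [mul_comm, Complex.mul_conj]
    have hnb : (Complex.normSq b : ℂ) = starRingEnd ℂ b * b := by
      rw [mul_comm, Complex.mul_conj]
    rw [hna, hnb]; ring
  rw [qf, expand]
  simp only [Complex.add_re, Complex.re_ofReal_mul, Complex.conj_re]
  rw [qf, qf]; ring

lemma isHermitian_real_smul (r : ℝ) {M : Matrix m m ℂ} (h : M.IsHermitian) :
    ((r : ℂ) • M).IsHermitian := by
  unfold Matrix.IsHermitian
  rw [conjTranspose_smul, h.eq, Complex.star_def, Complex.conj_ofReal]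

/-- path expansion -/
lemma qf_path {M : Matrix m m ℂ} (h : M.IsHermitian) (γ : ℂ) (z w : m → ℂ) (t : ℝ) :
    qf M ((((1-t : ℝ)) : ℂ) • z + (((t : ℝ) : ℂ) * γ) • w)
      = (1-t)^2 * qf M z + t^2 * Complex.normSq γ * qf M w
        + 2*((1-t)*t) * (γ * (star z ⬝ᵥ M.mulVec w)).re := by
  rw [qf_expand h]
  have h1 : Complex.normSq ((1-t : ℝ) : ℂ) = (1-t)^2 := by
    rw [Complex.normSq_ofReal]; ring
  have h2 : Complex.normSq (((t : ℝ) : ℂ) * γ) = t^2 * Complex.normSq γ := by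
    rw [Complex.normSq_mul, Complex.normSq_ofReal]; ring
  have h3 : starRingEnd ℂ ((1-t : ℝ) : ℂ) * (((t : ℝ) : ℂ) * γ) * (star z ⬝ᵥ M.mulVec w)
      = (((1-t)*t : ℝ) : ℂ) * (γ * (star z ⬝ᵥ M.mulVec w)) := by
    rw [Complex.conj_ofReal]; push_cast; ring
  rw [h1, h2, h3, Complex.re_ofReal_mul]
  ring

set_option maxHeartbeats 1600000 in
/-- Convexity of the normalized joint numerical range of two Hermitian matrices. -/
lemma joint_convex [DecidableEq m] {P Q : Matrix m m ℂ} (hP : P.IsHermitian)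
    (hQ : Q.IsHermitian) :
    Convex ℝ {p : ℝ × ℝ | ∃ v : m → ℂ, nsq v = 1 ∧ p = (qf P v, qf Q v)} := by
  rintro p ⟨z, hz1, rfl⟩ q ⟨w, hw1, rfl⟩ θ θ' hθ hθ' hθθ
  -- dependent case
  by_cases hdep : ∃ δ : ℂ, w = δ • z
  · obtain ⟨δ, rfl⟩ := hdep
    have hδ : Complex.normSq δ = 1 := by
      have := nsq_smul_vec δ z
      rw [hw1, hz1, mul_one] at this; exact this.symm
    have hPz : qf P (δ • z) = qf P z := by rw [qf_smul_vec, hδ, one_mul]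
    have hQz : qf Q (δ • z) = qf Q z := by rw [qf_smul_vec, hδ, one_mul]
    refine ⟨z, hz1, ?_⟩
    rw [hPz, hQz]
    have : θ • ((qf P z, qf Q z) : ℝ × ℝ) + θ' • (qf P z, qf Q z)
        = ((θ + θ') • ((qf P z, qf Q z) : ℝ × ℝ)) := by
      rw [add_smul]
    rw [this, hθθ, one_smul]
  · -- independent case
    set d1 : ℝ := qf P w - qf P z with hd1
    set d2 : ℝ := qf Q w - qf Q z with hd2
    by_cases hd : d1 = 0 ∧ d2 = 0
    · refine ⟨z, hz1, ?_⟩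
      have e1 : qf P w = qf P z := by have := hd.1; rw [hd1] at this; linarith
      have e2 : qf Q w = qf Q z := by have := hd.2; rw [hd2] at this; linarith
      rw [e1, e2]
      have : θ • ((qf P z, qf Q z) : ℝ × ℝ) + θ' • (qf P z, qf Q z)
          = ((θ + θ') • ((qf P z, qf Q z) : ℝ × ℝ)) := by rw [add_smul]
      rw [this, hθθ, one_smul]
    · -- main case: d ≠ 0
      have hdd : d1^2 + d2^2 ≠ 0 := by
        intro hcon
        apply hd
        constructor <;> nlinarith [sq_nonneg d1, sq_nonneg d2]
      set F : Matrix m m ℂ := (d1 : ℂ) • P + (d2 : ℂ) • Q with hF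
      set G : Matrix m m ℂ := ((-d2 : ℝ) : ℂ) • P + (d1 : ℂ) • Q with hG
      have hFh : F.IsHermitian := (isHermitian_real_smul d1 hP).add (isHermitian_real_smul d2 hQ)
      have hGh : G.IsHermitian :=
        (isHermitian_real_smul (-d2) hP).add (isHermitian_real_smul d1 hQ)
      have qfF : ∀ v, qf F v = d1 * qf P v + d2 * qf Q v := by
        intro v; rw [hF, qf_add_matrix, qf_smul_matrix, qf_smul_matrix]
      have qfG : ∀ v, qf G v = -d2 * qf P v + d1 * qf Q v := by
        intro v; rw [hG, qf_add_matrix, qf_smul_matrix, qf_smul_matrix]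
      set G' : Matrix m m ℂ := G - ((qf G z : ℝ) : ℂ) • (1 : Matrix m m ℂ) with hG'
      have hG'h : G'.IsHermitian := hGh.sub (isHermitian_real_smul _ isHermitian_one)
      have qfG' : ∀ v, qf G' v = qf G v - qf G z * nsq v := by
        intro v; rw [hG', qf_sub_matrix, qf_smul_matrix, qf_one]
      have qfG'z : qf G' z = 0 := by rw [qfG', hz1]; ring
      have qfG'w : qf G' w = 0 := by
        rw [qfG', hw1, qfG z, qfG w, hd1, hd2]; ring
      -- choice of phase
      set c₀ : ℂ := star z ⬝ᵥ G'.mulVec w with hc₀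
      set γ : ℂ := if c₀ = 0 then 1 else Complex.I * (starRingEnd ℂ c₀ / (‖c₀‖ : ℂ))
        with hγdef
      have hγ1 : Complex.normSq γ = 1 := by
        rw [hγdef]
        split_ifs with h0
        · simp
        · have hab : ‖c₀‖ ≠ 0 := norm_ne_zero_iff.mpr h0
          rw [Complex.normSq_mul, Complex.normSq_div, Complex.normSq_conj]
          simp only [Complex.normSq_I, one_mul, Complex.normSq_ofReal]
          rw [Complex.normSq_eq_norm_sq]
          field_simp
      have hγc : (γ * c₀).re = 0 := by
        rw [hγdef]
        split_ifs with h0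
        · simp [h0]
        · have hab : (‖c₀‖ : ℂ) ≠ 0 := by
            simp [norm_ne_zero_iff.mpr h0]
          have h2 : (starRingEnd ℂ c₀) * c₀ = ((Complex.normSq c₀ : ℝ) : ℂ) := by
            rw [mul_comm, Complex.mul_conj]
          have h1 : Complex.I * (starRingEnd ℂ c₀ / (‖c₀‖ : ℂ)) * c₀
              = Complex.I * (((Complex.normSq c₀ / ‖c₀‖ : ℝ)) : ℂ) := by
            push_cast
            field_simp
            linear_combination h2
          rw [h1]
          simp [Complex.mul_re]
      -- the path
      set v : ℝ → (m → ℂ) := fun t => (((1-t : ℝ)) : ℂ) • z + (((t : ℝ) : ℂ) * γ) • w with hv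
      have hzne : z ≠ 0 := by
        intro h0; rw [h0] at hz1; simp [nsq] at hz1
      have hγne : γ ≠ 0 := by
        intro h0; rw [h0] at hγ1; simp at hγ1
      have hvne : ∀ t ∈ Set.Icc (0:ℝ) 1, v t ≠ 0 := by
        intro t _ h0
        rcases eq_or_ne t 0 with rfl | ht0
        · apply hzne
          have : v 0 = z := by rw [hv]; simp
          rw [← this, h0]
        · apply hdep
          have hcoef : (((t : ℝ) : ℂ) * γ) ≠ 0 := by
            simp [ht0, hγne, Complex.ofReal_eq_zero]
          refine ⟨(((t : ℝ) : ℂ) * γ)⁻¹ * (-((1-t : ℝ) : ℂ)), ?_⟩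
          have h2 : (((1-t : ℝ)) : ℂ) • z + (((t : ℝ) : ℂ) * γ) • w = 0 := by
            rw [hv] at h0; exact h0
          have h4 : (((t : ℝ) : ℂ) * γ) • (w - ((((t : ℝ) : ℂ) * γ)⁻¹ * -((1-t:ℝ):ℂ)) • z)
              = 0 := by
            rw [smul_sub, smul_smul, ← mul_assoc, mul_inv_cancel₀ hcoef, one_mul, neg_smul,
              sub_neg_eq_add, add_comm]
            exact h2
          have h5 := (smul_eq_zero.mp h4).resolve_left hcoef
          exact (sub_eq_zero.mp h5)
      -- closed forms
      set rF : ℝ := (γ * (star z ⬝ᵥ F.mulVec w)).re with hrF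
      set r1 : ℝ := (γ * (star z ⬝ᵥ w)).re with hr1
      set D : ℝ → ℝ := fun t => (1-t)^2 + t^2 + 2*((1-t)*t) * r1 with hD
      set N : ℝ → ℝ := fun t => (1-t)^2 * qf F z + t^2 * qf F w + 2*((1-t)*t) * rF with hN
      have hDt : ∀ t, D t = nsq (v t) := by
        intro t
        rw [← qf_one, hv]
        rw [qf_path isHermitian_one γ z w t]
        rw [qf_one, qf_one, hz1, hw1, hγ1]
        simp only [one_mulVec]
        rw [hD]; ring
      have hNt : ∀ t, N t = qf F (v t) := by
        intro t
        rw [hv, qf_path hFh γ z w t, hγ1]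
        rw [hN]; ring
      have hG't : ∀ t, qf G' (v t) = 0 := by
        intro t
        rw [hv, qf_path hG'h γ z w t, hγ1, qfG'z, qfG'w, ← hc₀, hγc]
        ring
      have hDpos : ∀ t ∈ Set.Icc (0:ℝ) 1, 0 < D t := by
        intro t ht; rw [hDt t]; exact nsq_pos (hvne t ht)
      -- IVT
      set H : ℝ → ℝ := fun t => N t / D t with hH
      have hcont : ContinuousOn H (Set.uIcc (0:ℝ) 1) := by
        rw [Set.uIcc_of_le (by norm_num : (0:ℝ) ≤ 1)]
        have hNc : Continuous N := by
          rw [hN]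
          exact ((((continuous_const.sub continuous_id).pow 2).mul continuous_const).add
            ((continuous_id.pow 2).mul continuous_const)).add
            ((continuous_const.mul ((continuous_const.sub continuous_id).mul
              continuous_id)).mul continuous_const)
        have hDc : Continuous D := by
          rw [hD]
          exact (((continuous_const.sub continuous_id).pow 2).add
            (continuous_id.pow 2)).add
            ((continuous_const.mul ((continuous_const.sub continuous_id).mul
              continuous_id)).mul continuous_const)
        exact ContinuousOn.div hNc.continuousOn hDc.continuousOn
          (fun t ht => ne_of_gt (hDpos t ht))
      have hH0 : H 0 = qf F z := by rw [hH]; simp [hN, hD]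
      have hH1 : H 1 = qf F w := by rw [hH]; simp [hN, hD]
      set μ : ℝ := θ * qf F z + θ' * qf F w with hμ
      have hμ2 : μ = qf F z + θ' * (qf F w - qf F z) := by
        rw [hμ]
        have hsub : θ = 1 - θ' := by linarith
        rw [hsub]; ring
      have hμ3 : μ = qf F w - θ * (qf F w - qf F z) := by
        rw [hμ]
        have hsub : θ' = 1 - θ := by linarith
        rw [hsub]; ring
      have hμmem : μ ∈ Set.uIcc (H 0) (H 1) := by
        rw [hH0, hH1, Set.uIcc_eq_union]
        rcases le_total (qf F z) (qf F w) with hle | hle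
        · left
          constructor
          · rw [hμ2]; nlinarith [mul_nonneg hθ' (sub_nonneg.mpr hle)]
          · rw [hμ3]; nlinarith [mul_nonneg hθ (sub_nonneg.mpr hle)]
        · right
          constructor
          · rw [hμ3]; nlinarith [mul_nonneg hθ (sub_nonneg.mpr hle)]
          · rw [hμ2]; nlinarith [mul_nonneg hθ' (sub_nonneg.mpr hle)]
      obtain ⟨t₀, ht₀mem, ht₀⟩ := intermediate_value_uIcc hcont hμmem
      rw [Set.uIcc_of_le (by norm_num : (0:ℝ) ≤ 1)] at ht₀mem
      -- normalize
      set u : m → ℂ := v t₀ with hu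
      have hupos : 0 < nsq u := by rw [hu, ← hDt]; exact hDpos t₀ ht₀mem
      set ρ : ℝ := (Real.sqrt (nsq u))⁻¹ with hρ
      set v' : m → ℂ := ((ρ : ℝ) : ℂ) • u with hv'
      have hρ2 : ρ^2 * nsq u = 1 := by
        rw [hρ, inv_pow, Real.sq_sqrt (le_of_lt hupos)]
        exact inv_mul_cancel₀ (ne_of_gt hupos)
      have hnsqv' : nsq v' = 1 := by
        rw [hv', nsq_smul_vec, Complex.normSq_ofReal]
        nlinarith [hρ2]
      have hqv' : ∀ M : Matrix m m ℂ, qf M v' = ρ^2 * qf M u := by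
        intro M; rw [hv', qf_smul_vec, Complex.normSq_ofReal, sq]
      have hNμ : N t₀ = μ * D t₀ := by
        have h := ht₀
        rw [hH] at h
        simp only at h
        exact (div_eq_iff (ne_of_gt (hDpos t₀ ht₀mem))).mp h
      have hFv' : qf F v' = μ := by
        rw [hqv' F, hu, ← hNt t₀, hNμ, hDt t₀]
        linear_combination μ * hρ2
      have hG'v' : qf G' v' = 0 := by
        rw [hqv' G', hu, hG't t₀, mul_zero]
      have hGv' : qf G v' = qf G z := by
        have h := qfG' v'
        rw [hG'v', hnsqv'] at h
        linarith
      have E1' : d1 * qf P v' + d2 * qf Q v'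
          = θ * (d1 * qf P z + d2 * qf Q z) + θ' * (d1 * qf P w + d2 * qf Q w) := by
        rw [← qfF, ← qfF, ← qfF]
        exact hFv'.trans hμ
      have E2 : -d2 * qf P v' + d1 * qf Q v' = -d2 * qf P z + d1 * qf Q z := by
        rw [← qfG, ← qfG]
        exact hGv'
      have hθ'eq : θ' = 1 - θ := by linarith
      rw [hd1, hd2] at E1' E2
      rw [hθ'eq] at E1'
      have hXgoal : qf P v' = θ * qf P z + θ' * qf P w := by
        refine mul_left_cancel₀ hdd ?_
        rw [hd1, hd2, hθ'eq]
        linear_combination (qf P w - qf P z) * E1' - (qf Q w - qf Q z) * E2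
      have hYgoal : qf Q v' = θ * qf Q z + θ' * qf Q w := by
        refine mul_left_cancel₀ hdd ?_
        rw [hd1, hd2, hθ'eq]
        linear_combination (qf Q w - qf Q z) * E1' + (qf P w - qf P z) * E2
      refine ⟨v', hnsqv', ?_⟩
      simp only [Prod.smul_mk, Prod.mk_add_mk, smul_eq_mul, Prod.mk.injEq]
      exact ⟨hXgoal.symm, hYgoal.symm⟩

lemma normalize [DecidableEq m] {v : m → ℂ} (hv : v ≠ 0) :
    ∃ v' : m → ℂ, nsq v' = 1 ∧ ∀ M : Matrix m m ℂ, qf M v' * nsq v = qf M v := by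
  have hpos := nsq_pos hv
  set ρ : ℝ := (Real.sqrt (nsq v))⁻¹ with hρ
  have hρ2 : ρ^2 * nsq v = 1 := by
    rw [hρ, inv_pow, Real.sq_sqrt (le_of_lt hpos)]
    exact inv_mul_cancel₀ (ne_of_gt hpos)
  refine ⟨((ρ : ℝ) : ℂ) • v, ?_, ?_⟩
  · rw [nsq_smul_vec, Complex.normSq_ofReal]; nlinarith
  · intro M
    rw [qf_smul_vec, Complex.normSq_ofReal]
    linear_combination qf M v * hρ2

lemma homog_s_lemma [DecidableEq m] {P Q : Matrix m m ℂ} (hP : P.IsHermitian)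
    (hQ : Q.IsHermitian)
    (hyp : ∀ v : m → ℂ, qf P v ≤ 0 → qf Q v ≤ 0)
    (slater : ∃ v : m → ℂ, qf P v < 0) :
    ∃ η : ℝ, 0 ≤ η ∧ ∀ v : m → ℂ, 0 ≤ η * qf P v - qf Q v := by
  obtain ⟨v₀, hv₀⟩ := slater
  have hv₀ne : v₀ ≠ 0 := by
    intro h; rw [h, qf_zero] at hv₀; linarith
  set S := {p : ℝ × ℝ | ∃ v : m → ℂ, nsq v = 1 ∧ p = (qf P v, qf Q v)} with hS
  set C := {p : ℝ × ℝ | p.1 < 0 ∧ 0 < p.2} with hC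
  have hCopen : IsOpen C := by
    apply IsOpen.inter
    · exact isOpen_lt continuous_fst continuous_const
    · exact isOpen_lt continuous_const continuous_snd
  have hCconv : Convex ℝ C := by
    have : C = Set.Iio (0:ℝ) ×ˢ Set.Ioi (0:ℝ) := by
      ext p; simp [hC, Set.mem_prod]
    rw [this]
    exact (convex_Iio 0).prod (convex_Ioi 0)
  have hdisj : Disjoint C S := by
    rw [Set.disjoint_left]
    rintro p ⟨hp1, hp2⟩ ⟨v, hv1, rfl⟩
    exact absurd hp2 (not_lt.mpr (hyp v (le_of_lt hp1)))
  obtain ⟨f, u, hfC, hfS⟩ := geometric_hahn_banach_open hCconv hCopen (joint_convex hP hQ) hdisj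
  set α : ℝ := f ((1:ℝ), (0:ℝ)) with hα'
  set β : ℝ := f ((0:ℝ), (1:ℝ)) with hβ'
  have hf : ∀ p : ℝ × ℝ, f p = p.1 * α + p.2 * β := by
    intro p
    have hp : p = p.1 • (((1:ℝ), (0:ℝ)) : ℝ × ℝ) + p.2 • (((0:ℝ), (1:ℝ)) : ℝ × ℝ) := by
      ext <;> simp
    calc f p = f (p.1 • (((1:ℝ), (0:ℝ)) : ℝ × ℝ) + p.2 • (((0:ℝ), (1:ℝ)) : ℝ × ℝ)) := by
          rw [← hp]
      _ = p.1 * α + p.2 * β := by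
          rw [f.map_add, f.map_smul, f.map_smul, smul_eq_mul, smul_eq_mul]
  -- sign facts
  have hβ : β ≤ 0 := by
    by_contra hcon
    push_neg at hcon
    set M : ℝ := max 1 ((u + α)/β + 1) with hM
    have hMC : ((-1 : ℝ), M) ∈ C := by
      constructor
      · norm_num
      · have : (0:ℝ) < 1 := one_pos
        exact lt_of_lt_of_le one_pos (le_max_left _ _)
    have h1 := hfC _ hMC
    rw [hf] at h1
    simp only at h1
    have h2 : (u + α)/β + 1 ≤ M := le_max_right _ _
    have h3 : (u + α)/β < M := by linarith
    have h4 : u + α < M * β := by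
      rw [div_lt_iff₀ hcon] at h3; linarith
    linarith
  have hα : 0 ≤ α := by
    by_contra hcon
    push_neg at hcon
    set M : ℝ := max 1 ((u - β)/(-α) + 1) with hM
    have hMC : ((-M : ℝ), (1:ℝ)) ∈ C := by
      constructor
      · have : (0:ℝ) < M := lt_of_lt_of_le one_pos (le_max_left _ _)
        simp only; linarith
      · norm_num
    have h1 := hfC _ hMC
    rw [hf] at h1
    simp only at h1
    have h2 : (u - β)/(-α) + 1 ≤ M := le_max_right _ _
    have h3 : (u - β)/(-α) < M := by linarith
    have h4 : u - β < M * (-α) := by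
      rw [div_lt_iff₀ (by linarith : (0:ℝ) < -α)] at h3; linarith
    linarith
  have hu : 0 ≤ u := by
    by_contra hcon
    push_neg at hcon
    set ε : ℝ := -u / (α - β + 1) with hε
    have hαβ : (0:ℝ) < α - β + 1 := by linarith
    have hεpos : 0 < ε := by
      rw [hε]; exact div_pos (by linarith) hαβ
    have hεC : ((-ε : ℝ), ε) ∈ C := ⟨by simp only; linarith, by simp only; linarith⟩
    have h1 := hfC _ hεC
    rw [hf] at h1
    simp only at h1
    -- h1 : -ε * α + ε * β < u
    have h5 : ε * (α - β) ≤ -u := by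
      rw [hε]
      rw [div_mul_eq_mul_div]
      rw [div_le_iff₀ hαβ]
      nlinarith [mul_nonneg (le_of_lt (neg_pos.mpr hcon)) (by linarith : (0:ℝ) ≤ α - β)]
    linarith
  -- main inequality for all v
  have hmain : ∀ v : m → ℂ, 0 ≤ α * qf P v + β * qf Q v := by
    intro v
    rcases eq_or_ne v 0 with rfl | hvne
    · rw [qf_zero, qf_zero]; simp
    · obtain ⟨v', hv'1, hv'q⟩ := normalize hvne
      have hmem : ((qf P v', qf Q v') : ℝ × ℝ) ∈ S := ⟨v', hv'1, rfl⟩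
      have h1 := hfS _ hmem
      rw [hf] at h1
      simp only at h1
      have h2 : 0 ≤ qf P v' * α + qf Q v' * β := le_trans hu h1
      have h3 := mul_nonneg h2 (le_of_lt (nsq_pos hvne))
      have hqP := hv'q P
      have hqQ := hv'q Q
      nlinarith [h3]
  -- β < 0
  have hβneg : β < 0 := by
    rcases lt_or_eq_of_le hβ with h | h
    · exact h
    · exfalso
      -- β = 0
      rcases lt_or_eq_of_le hα with hα0 | hα0
      · -- α > 0 : qf P v ≥ 0 always, contradicting slater
        have hm := hmain v₀
        rw [h, zero_mul, add_zero] at hm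
        nlinarith
      · -- α = 0 and β = 0 : f = 0, contradiction via u
        have hfz : ∀ p : ℝ × ℝ, f p = 0 := by
          intro p; rw [hf, h, ← hα0]; ring
        have hC1 : ((-1 : ℝ), (1:ℝ)) ∈ C := ⟨by norm_num, by norm_num⟩
        have h1 := hfC _ hC1
        rw [hfz] at h1
        obtain ⟨v', hv'1, hv'q⟩ := normalize hv₀ne
        have h2 := hfS _ ⟨v', hv'1, rfl⟩
        rw [hfz] at h2
        linarith
  refine ⟨α / (-β), div_nonneg hα (by linarith), ?_⟩
  intro v
  have h1 := hmain v
  have h2 : 0 < -β := by linarith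
  have key : α / (-β) * qf P v - qf Q v = (α * qf P v + β * qf Q v) / (-β) := by
    have hβne : β ≠ 0 := ne_of_lt hβneg
    field_simp
    ring
  rw [key]
  exact div_nonneg h1 (le_of_lt h2)

end SAux

namespace SBlock
open SAux

variable {n : ℕ}

lemma blockHerm (A : Matrix (Fin n) (Fin n) ℂ) (hA : A.IsHermitian) (b : Fin n → ℂ) (c : ℝ) :
    (blockMat A b c).IsHermitian := by
  apply Matrix.IsHermitian.fromBlocks hA
  · ext u j
    rfl
  · ext u u'
    exact Complex.conj_ofReal c

/-- every vector on the sum type is an elim -/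
lemma elim_decomp (z : Fin n ⊕ Unit → ℂ) :
    z = Sum.elim (z ∘ Sum.inl) (fun _ => z (Sum.inr ())) := by
  funext i
  cases i with
  | inl j => rfl
  | inr u => cases u; rfl

lemma star_elim (x : Fin n → ℂ) (y : Unit → ℂ) :
    star (Sum.elim x y) = Sum.elim (star x) (star y) := by
  funext i
  cases i with
  | inl j => rfl
  | inr u => rfl

/-- key dot product computation -/
lemma block_dot (A : Matrix (Fin n) (Fin n) ℂ) (b : Fin n → ℂ) (c : ℝ)
    (x : Fin n → ℂ) (t : ℂ) :
    star (Sum.elim x (fun _ => t)) ⬝ᵥ (blockMat A b c).mulVec (Sum.elim x (fun _ => t))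
      = star x ⬝ᵥ A.mulVec x + t * (star x ⬝ᵥ b) + starRingEnd ℂ t * (star b ⬝ᵥ x)
        + (c : ℂ) * (starRingEnd ℂ t * t) := by
  rw [blockMat, show (Sum.elim x (fun _ => t) : Fin n ⊕ Unit → ℂ)
    = (x ⊕ᵥ (fun _ => t)) from rfl]
  erw [fromBlocks_mulVec]
  rw [star_elim]
  rw [sumElim_dotProduct_sumElim]
  simp only [Sum.elim_comp_inl, Sum.elim_comp_inr]
  have h1 : ((fun (i : Fin n) (_ : Unit) => b i) : Matrix (Fin n) Unit ℂ) *ᵥ (fun _ => t)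
      = fun i => b i * t := by
    funext i; simp [Matrix.mulVec, dotProduct]
  have h2 : ((fun (_ : Unit) (j : Fin n) => star (b j)) : Matrix Unit (Fin n) ℂ) *ᵥ x
      = fun _ => star b ⬝ᵥ x := by
    funext u; simp [Matrix.mulVec, dotProduct]
  have h3 : ((fun (_ _ : Unit) => (c : ℂ)) : Matrix Unit Unit ℂ) *ᵥ (fun _ => t)
      = fun _ => (c : ℂ) * t := by
    funext u; simp [Matrix.mulVec, dotProduct]
  rw [h1, h2, h3]
  rw [dotProduct_add, dotProduct_add]
  have h4 : star x ⬝ᵥ (fun i => b i * t) = t * (star x ⬝ᵥ b) := by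
    simp only [dotProduct, Finset.mul_sum]
    exact Finset.sum_congr rfl fun i _ => by ring
  have h5 : (star (fun (_ : Unit) => t)) ⬝ᵥ (fun _ => star b ⬝ᵥ x)
      = starRingEnd ℂ t * (star b ⬝ᵥ x) := by
    simp only [dotProduct, Pi.star_apply, Finset.univ_unique, Finset.sum_singleton,
      starRingEnd_apply]
  have h6 : (star (fun (_ : Unit) => t)) ⬝ᵥ (fun _ => (c : ℂ) * t)
      = (c : ℂ) * (starRingEnd ℂ t * t) := by
    simp only [dotProduct, Pi.star_apply, Finset.univ_unique, Finset.sum_singleton,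
      starRingEnd_apply]
    ring
  rw [h4, h5, h6]
  ring

lemma qf_block (A : Matrix (Fin n) (Fin n) ℂ) (b : Fin n → ℂ) (c : ℝ)
    (x : Fin n → ℂ) (t : ℂ) :
    qf (blockMat A b c) (Sum.elim x (fun _ => t))
      = qf A x + 2 * (t * (star x ⬝ᵥ b)).re + c * Complex.normSq t := by
  rw [qf, block_dot]
  have hbx : star b ⬝ᵥ x = starRingEnd ℂ (star x ⬝ᵥ b) := by
    rw [starRingEnd_apply]; exact star_dotProduct b x
  have hconj : starRingEnd ℂ t * (star b ⬝ᵥ x) = starRingEnd ℂ (t * (star x ⬝ᵥ b)) := by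
    rw [hbx, ← map_mul (starRingEnd ℂ)]
  have hnsq : (c : ℂ) * (starRingEnd ℂ t * t) = ((c * Complex.normSq t : ℝ) : ℂ) := by
    rw [mul_comm (starRingEnd ℂ t) t, Complex.mul_conj]
    push_cast; ring
  rw [hconj, hnsq]
  simp only [Complex.add_re, Complex.conj_re, Complex.ofReal_re]
  rw [qf]; ring

lemma qf_block_one (A : Matrix (Fin n) (Fin n) ℂ) (b : Fin n → ℂ) (c : ℝ) (x : Fin n → ℂ) :
    qf (blockMat A b c) (Sum.elim x (fun _ => 1)) = quadFun A b c x := by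
  rw [qf_block]
  have : star x ⬝ᵥ b = starRingEnd ℂ (star b ⬝ᵥ x) := by
    rw [starRingEnd_apply]; exact star_dotProduct x b
  rw [quadFun]
  simp only [Complex.add_re, Complex.ofReal_re, one_mul, Complex.normSq_one, mul_one, this,
    Complex.conj_re]
  rw [qf]
  ring

lemma qf_block_zero (A : Matrix (Fin n) (Fin n) ℂ) (b : Fin n → ℂ) (c : ℝ) (x : Fin n → ℂ) :
    qf (blockMat A b c) (Sum.elim x (fun _ => 0)) = qf A x := by
  rw [qf_block]; simp

/-- scaling identity for `t ≠ 0` -/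

lemma qf_block_scale (A : Matrix (Fin n) (Fin n) ℂ) (b : Fin n → ℂ) (c : ℝ)
    (x : Fin n → ℂ) (t : ℂ) (ht : t ≠ 0) :
    qf (blockMat A b c) (Sum.elim x (fun _ => t))
      = Complex.normSq t * quadFun A b c (t⁻¹ • x) := by
  have helim : (Sum.elim x (fun _ => t) : Fin n ⊕ Unit → ℂ)
      = t • Sum.elim (t⁻¹ • x) (fun _ => (1:ℂ)) := by
    funext i
    cases i with
    | inl j =>
      simp only [Sum.elim_inl, Pi.smul_apply, smul_eq_mul]
      field_simp
    | inr u =>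
      simp only [Sum.elim_inr, Pi.smul_apply, smul_eq_mul, mul_one]
  rw [helim, qf_smul_vec, qf_block_one]

/-- the limiting case for `t = 0` -/
lemma limit_case {A₁ A₂ : Matrix (Fin n) (Fin n) ℂ} (hA₁ : A₁.IsHermitian)
    (hA₂ : A₂.IsHermitian) {b₁ b₂ : Fin n → ℂ} {c₁ c₂ : ℝ}
    (hyp : ∀ x : Fin n → ℂ, quadFun A₁ b₁ c₁ x ≤ 0 → quadFun A₂ b₂ c₂ x ≤ 0)
    {xb : Fin n → ℂ} (hxb : quadFun A₁ b₁ c₁ xb < 0)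
    (x : Fin n → ℂ) (hx : qf A₁ x ≤ 0) : qf A₂ x ≤ 0 := by
  set B₁ := blockMat A₁ b₁ c₁ with hB₁def
  set B₂ := blockMat A₂ b₂ c₂ with hB₂def
  have hB₁ : B₁.IsHermitian := blockHerm A₁ hA₁ b₁ c₁
  have hB₂ : B₂.IsHermitian := blockHerm A₂ hA₂ b₂ c₂
  set z : Fin n ⊕ Unit → ℂ := Sum.elim xb (fun _ => (1:ℂ)) with hz
  set e : Fin n ⊕ Unit → ℂ := Sum.elim x (fun _ => (0:ℂ)) with he
  set c : ℂ := star z ⬝ᵥ B₁.mulVec e with hc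
  set γ : ℂ := if c = 0 then 1 else -(starRingEnd ℂ c / (‖c‖ : ℂ)) with hγdef
  have hγ1 : Complex.normSq γ = 1 := by
    rw [hγdef]
    split_ifs with h0
    · simp
    · have hab : ‖c‖ ≠ 0 := norm_ne_zero_iff.mpr h0
      rw [Complex.normSq_neg, Complex.normSq_div, Complex.normSq_conj,
        Complex.normSq_ofReal, Complex.normSq_eq_norm_sq]
      field_simp
  have hγc : (γ * c).re ≤ 0 := by
    rw [hγdef]
    split_ifs with h0
    · simp [h0]
    · have hab : ‖c‖ ≠ 0 := norm_ne_zero_iff.mpr h0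
      have h2 : (starRingEnd ℂ c) * c = ((Complex.normSq c : ℝ) : ℂ) := by
        rw [mul_comm, Complex.mul_conj]
      have h1 : -(starRingEnd ℂ c / (‖c‖ : ℂ)) * c
          = -(((Complex.normSq c : ℝ) : ℂ) / ((‖c‖ : ℝ) : ℂ)) := by
        rw [neg_mul, div_mul_eq_mul_div, h2]
      rw [h1, ← Complex.ofReal_div, ← Complex.ofReal_neg, Complex.ofReal_re]
      have : 0 ≤ Complex.normSq c / ‖c‖ :=
        div_nonneg (Complex.normSq_nonneg c) (norm_nonneg c)
      linarith
  -- path expansion for a Hermitian block matrix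
  have helim : ∀ s : ℝ, (Sum.elim (xb + (((s:ℝ):ℂ) * γ) • x) (fun _ => (1:ℂ)) :
      Fin n ⊕ Unit → ℂ) = (1:ℂ) • z + (((s:ℝ):ℂ) * γ) • e := by
    intro s
    funext i
    cases i with
    | inl j => simp [hz, he]
    | inr u => simp [hz, he]
  have expand : ∀ (B : Matrix (Fin n ⊕ Unit) (Fin n ⊕ Unit) ℂ), B.IsHermitian → ∀ s : ℝ,
      qf B (Sum.elim (xb + (((s:ℝ):ℂ) * γ) • x) (fun _ => (1:ℂ)))
        = qf B z + s^2 * qf B e + 2 * s * (γ * (star z ⬝ᵥ B.mulVec e)).re := by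
    intro B hB s
    rw [helim s, qf_expand hB]
    have h1 : Complex.normSq (1:ℂ) = 1 := Complex.normSq_one
    have h2 : Complex.normSq (((s:ℝ):ℂ) * γ) = s^2 := by
      rw [Complex.normSq_mul, Complex.normSq_ofReal, hγ1]; ring
    have h3 : (starRingEnd ℂ (1:ℂ) * (((s:ℝ):ℂ) * γ) * (star z ⬝ᵥ B.mulVec e)).re
        = s * (γ * (star z ⬝ᵥ B.mulVec e)).re := by
      simp only [_root_.map_one, one_mul, mul_assoc, Complex.re_ofReal_mul]
    rw [h1, h2, h3]
    ring
  -- the first constraint stays negative along the path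
  have hneg : ∀ s : ℝ, 0 ≤ s → quadFun A₁ b₁ c₁ (xb + (((s:ℝ):ℂ) * γ) • x) < 0 := by
    intro s hs
    rw [← qf_block_one A₁ b₁ c₁, ← hB₁def, expand B₁ hB₁ s]
    have e1 : qf B₁ z = quadFun A₁ b₁ c₁ xb := by rw [hz, hB₁def, qf_block_one]
    have e2 : qf B₁ e = qf A₁ x := by rw [he, hB₁def, qf_block_zero]
    rw [e1, e2, ← hc]
    nlinarith [sq_nonneg s, mul_nonneg hs (neg_nonneg.mpr hγc)]
  -- hence the second is nonpositive along the path
  set r₂ : ℝ := (γ * (star z ⬝ᵥ B₂.mulVec e)).re with hr₂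
  have h2all : ∀ s : ℝ, 0 ≤ s →
      quadFun A₂ b₂ c₂ xb + s^2 * qf A₂ x + 2 * s * r₂ ≤ 0 := by
    intro s hs
    have := hyp _ (le_of_lt (hneg s hs))
    rw [← qf_block_one A₂ b₂ c₂, ← hB₂def, expand B₂ hB₂ s] at this
    have e1 : qf B₂ z = quadFun A₂ b₂ c₂ xb := by rw [hz, hB₂def, qf_block_one]
    have e2 : qf B₂ e = qf A₂ x := by rw [he, hB₂def, qf_block_zero]
    rw [e1, e2, ← hr₂] at this
    linarith
  -- conclude
  by_contra hpos
  push_neg at hpos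
  set K : ℝ := |quadFun A₂ b₂ c₂ xb| + 2 * |r₂| + 1 with hK
  set s : ℝ := max 1 (K / qf A₂ x) with hs
  have hs1 : 1 ≤ s := le_max_left _ _
  have hs0 : 0 ≤ s := by linarith
  have hsK : K ≤ s * qf A₂ x := by
    have h4 : K / qf A₂ x ≤ s := le_max_right _ _
    rw [div_le_iff₀ hpos] at h4
    linarith
  have hfin := h2all s hs0
  nlinarith [abs_nonneg r₂, abs_nonneg (quadFun A₂ b₂ c₂ xb), neg_abs_le r₂,
    neg_abs_le (quadFun A₂ b₂ c₂ xb), mul_le_mul_of_nonneg_left hsK hs0,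
    mul_le_mul_of_nonneg_right hs1 (abs_nonneg r₂)]

end SBlock

open SAux SBlock in
set_option maxHeartbeats 1600000 in
/-- The S-procedure (S-lemma) over ℂⁿ. -/
theorem s_procedure {n : ℕ} (hn : 0 < n)
    (A₁ A₂ : Matrix (Fin n) (Fin n) ℂ) (hA₁ : A₁.IsHermitian) (hA₂ : A₂.IsHermitian)
    (b₁ b₂ : Fin n → ℂ) (c₁ c₂ : ℝ)
    (hSlater : ∃ x : Fin n → ℂ, quadFun A₁ b₁ c₁ x < 0) :
    (∀ x : Fin n → ℂ, quadFun A₁ b₁ c₁ x ≤ 0 → quadFun A₂ b₂ c₂ x ≤ 0) ↔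
      ∃ η : ℝ, 0 ≤ η ∧
        ((η : ℂ) • blockMat A₁ b₁ c₁ - blockMat A₂ b₂ c₂).PosSemidef := by
  obtain ⟨xb, hxb⟩ := hSlater
  constructor
  · intro hyp
    have hB₁ : (blockMat A₁ b₁ c₁).IsHermitian := blockHerm A₁ hA₁ b₁ c₁
    have hB₂ : (blockMat A₂ b₂ c₂).IsHermitian := blockHerm A₂ hA₂ b₂ c₂
    have hyp' : ∀ z : Fin n ⊕ Unit → ℂ,
        qf (blockMat A₁ b₁ c₁) z ≤ 0 → qf (blockMat A₂ b₂ c₂) z ≤ 0 := by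
      intro z hz
      have hzd : z = Sum.elim (z ∘ Sum.inl) (fun _ => z (Sum.inr ())) := elim_decomp z
      set x := z ∘ Sum.inl with hx
      set t := z (Sum.inr ()) with ht
      rw [hzd] at hz ⊢
      rcases eq_or_ne t 0 with ht0 | ht0
      · rw [ht0] at hz ⊢
        rw [qf_block_zero] at hz
        rw [qf_block_zero]
        exact limit_case hA₁ hA₂ hyp hxb x hz
      · rw [qf_block_scale A₁ b₁ c₁ x t ht0] at hz
        rw [qf_block_scale A₂ b₂ c₂ x t ht0]
        have hns : 0 < Complex.normSq t := Complex.normSq_pos.mpr ht0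
        have hf1 : quadFun A₁ b₁ c₁ (t⁻¹ • x) ≤ 0 := by nlinarith
        have hf2 := hyp _ hf1
        nlinarith
    have slater' : ∃ zv : Fin n ⊕ Unit → ℂ, qf (blockMat A₁ b₁ c₁) zv < 0 :=
      ⟨Sum.elim xb (fun _ => 1), by rw [qf_block_one]; exact hxb⟩
    obtain ⟨η, hη, hineq⟩ := homog_s_lemma hB₁ hB₂ hyp' slater'
    refine ⟨η, hη, posSemidef_iff_dotProduct_mulVec.mpr ⟨?_, ?_⟩⟩
    · exact (isHermitian_real_smul η hB₁).sub hB₂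
    · intro zv
      rw [Complex.le_def]
      refine ⟨?_, ?_⟩
      · have h1 := hineq zv
        rw [← qf_smul_matrix, ← qf_sub_matrix] at h1
        simpa [qf] using h1
      · rw [im_eq_zero ((isHermitian_real_smul η hB₁).sub hB₂) zv]
        simp
  · rintro ⟨η, hη, hpsd⟩ x hf1
    have h0 := hpsd.dotProduct_mulVec_nonneg (Sum.elim x (fun _ => (1:ℂ)))
    have h1 : (0:ℝ) ≤ qf ((η : ℂ) • blockMat A₁ b₁ c₁ - blockMat A₂ b₂ c₂)
        (Sum.elim x (fun _ => 1)) := by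
      have := (Complex.le_def.mp h0).1
      simpa [qf] using this
    rw [qf_sub_matrix, qf_smul_matrix, qf_block_one, qf_block_one] at h1
    nlinarith [mul_nonneg hη (neg_nonneg.mpr hf1)]
end

section
/- (Proposition 1) Suppose that for every n the following hold: Tr(H_n W_n) > 0 and constraint (20) holds with parameter θ_n > 0. Define y_n := (θ_n/(1+θ_n)) · (Tr(H_n(Σ_{k=1}^N W_k + Q)) + σ_{u,n}²)/Tr(H_n W_n). Then for every n one has 0 < y_n ≤ 1; the matrices Ŵ_n := y_n W_n and Q̂ := Q + Σ_{k=1}^N (1 − y_k) W_k are positive semidefinite; Σ_{k=1}^N Ŵ_k + Q̂ = Σ_{k=1}^N W_k + Q; and for every n constraint (20) holds with equality for (Ŵ_1,…,Ŵ_N, Q̂), i.e., ((1+θ_n)/θ_n)·Tr(H_n Ŵ_n) = Σ_{k=1}^N Tr(H_n Ŵ_k) + Tr(H_n Q̂) + σ_{u,n}². -/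
open Matrix
open scoped ComplexOrder

/-- Real part of `Tr(A B)`. -/
noncomputable def trR {n : ℕ} (A B : Matrix (Fin n) (Fin n) ℂ) : ℝ :=
  (Matrix.trace (A * B)).re

lemma trR_add {n : ℕ} (A B C : Matrix (Fin n) (Fin n) ℂ) :
    trR A (B + C) = trR A B + trR A C := by
  simp [trR, Matrix.mul_add]

lemma trR_smul {n : ℕ} (A B : Matrix (Fin n) (Fin n) ℂ) (r : ℝ) :
    trR A ((r : ℂ) • B) = r * trR A B := by
  simp [trR, Matrix.mul_smul]

lemma trR_sum {n N : ℕ} (A : Matrix (Fin n) (Fin n) ℂ)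
    (B : Fin N → Matrix (Fin n) (Fin n) ℂ) :
    trR A (∑ k, B k) = ∑ k, trR A (B k) := by
  simp [trR, Matrix.mul_sum, Complex.re_sum]

lemma trR_vecMulVec_nonneg {n : ℕ} (a : Fin n → ℂ) {B : Matrix (Fin n) (Fin n) ℂ}
    (hB : B.PosSemidef) : 0 ≤ trR (Matrix.vecMulVec a (star a)) B := by
  have key : Matrix.trace (Matrix.vecMulVec a (star a) * B) = star a ⬝ᵥ (B *ᵥ a) := by
    simp only [Matrix.trace, Matrix.diag, Matrix.mul_apply, Matrix.vecMulVec_apply,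
      dotProduct, Matrix.mulVec, Finset.mul_sum]
    rw [Finset.sum_comm]
    congr 1; ext j; congr 1; ext i; ring
  have := hB.dotProduct_mulVec_nonneg a
  rw [Complex.le_def] at this
  simpa [trR, key] using this.1

lemma psd_real_smul {n : ℕ} {B : Matrix (Fin n) (Fin n) ℂ} {r : ℝ}
    (hB : B.PosSemidef) (hr : 0 ≤ r) : ((r : ℂ) • B).PosSemidef := by
  refine Matrix.posSemidef_iff_dotProduct_mulVec.mpr ⟨?_, ?_⟩
  · unfold Matrix.IsHermitian
    rw [Matrix.conjTranspose_smul, hB.1.eq]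
    simp
  · intro x
    rw [Matrix.smul_mulVec, dotProduct_smul, smul_eq_mul]
    exact mul_nonneg (by simpa using Complex.zero_le_real.mpr hr) (hB.dotProduct_mulVec_nonneg x)

lemma psd_sum {n N : ℕ} (f : Fin N → Matrix (Fin n) (Fin n) ℂ)
    (hf : ∀ k, (f k).PosSemidef) : (∑ k, f k).PosSemidef :=
  Finset.sum_induction f _ (fun _ _ ha hb => ha.add hb) Matrix.PosSemidef.zero
    (fun k _ => hf k)

/-- Proposition 1: feasibility-preserving rescaling that makes constraint (20) active. -/
theorem prop1_activation {N Nt : ℕ} (hN : 0 < N) (hNt : 0 < Nt)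
    (W : Fin N → Matrix (Fin Nt) (Fin Nt) ℂ) (Q : Matrix (Fin Nt) (Fin Nt) ℂ)
    (hW : ∀ n, (W n).PosSemidef) (hQ : Q.PosSemidef)
    (h : Fin N → Fin Nt → ℂ)
    (H : Fin N → Matrix (Fin Nt) (Fin Nt) ℂ)
    (hH : ∀ n, H n = Matrix.vecMulVec (h n) (star (h n)))
    (σsq : Fin N → ℝ) (hσ : ∀ n, 0 < σsq n)
    (θ : Fin N → ℝ) (hθ : ∀ n, 0 < θ n)
    (htr : ∀ n, 0 < trR (H n) (W n))
    (h20 : ∀ n, ((1 + θ n) / θ n) * trR (H n) (W n) ≥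
        (∑ k, trR (H n) (W k)) + trR (H n) Q + σsq n)
    (y : Fin N → ℝ)
    (hy : ∀ n, y n = (θ n / (1 + θ n)) *
        ((trR (H n) ((∑ k, W k) + Q) + σsq n) / trR (H n) (W n)))
    (What : Fin N → Matrix (Fin Nt) (Fin Nt) ℂ)
    (hWhat : ∀ n, What n = (y n : ℂ) • W n)
    (Qhat : Matrix (Fin Nt) (Fin Nt) ℂ)
    (hQhat : Qhat = Q + ∑ k, ((1 - y k : ℝ) : ℂ) • W k) :
    (∀ n, 0 < y n ∧ y n ≤ 1) ∧
    (∀ n, (What n).PosSemidef) ∧ Qhat.PosSemidef ∧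
    ((∑ k, What k) + Qhat = (∑ k, W k) + Q) ∧
    (∀ n, ((1 + θ n) / θ n) * trR (H n) (What n) =
        (∑ k, trR (H n) (What k)) + trR (H n) Qhat + σsq n) := by
  have h1θ : ∀ n, (0:ℝ) < 1 + θ n := fun n => by linarith [hθ n]
  have key : ∀ n, θ n / (1 + θ n) * ((1 + θ n) / θ n) = 1 := fun n => by
    have h1 := (hθ n).ne'
    have h2 := (h1θ n).ne'
    field_simp
  have hHpsd : ∀ n k, 0 ≤ trR (H n) (W k) := fun n k => by
    rw [hH n]; exact trR_vecMulVec_nonneg _ (hW k)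
  have hHQ : ∀ n, 0 ≤ trR (H n) Q := fun n => by
    rw [hH n]; exact trR_vecMulVec_nonneg _ hQ
  set S : Fin N → ℝ := fun n => (∑ k, trR (H n) (W k)) + trR (H n) Q + σsq n with hS
  have hy' : ∀ n, y n = (θ n / (1 + θ n)) * (S n / trR (H n) (W n)) := fun n => by
    rw [hy n, hS]; rw [trR_add, trR_sum]
  have hSpos : ∀ n, 0 < S n := fun n => by
    have h1 := Finset.sum_nonneg (fun k (_ : k ∈ Finset.univ) => hHpsd n k)
    have h2 := hHQ n; have h3 := hσ n
    simp only [hS]; linarith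
  have hypos : ∀ n, 0 < y n := fun n => by
    rw [hy' n]
    exact mul_pos (div_pos (hθ n) (h1θ n)) (div_pos (hSpos n) (htr n))
  have hyle : ∀ n, y n ≤ 1 := fun n => by
    rw [hy' n]
    have hdiv : S n / trR (H n) (W n) ≤ (1 + θ n) / θ n :=
      (div_le_iff₀ (htr n)).mpr (by linarith [h20 n])
    calc θ n / (1 + θ n) * (S n / trR (H n) (W n))
        ≤ θ n / (1 + θ n) * ((1 + θ n) / θ n) :=
          mul_le_mul_of_nonneg_left hdiv (le_of_lt (div_pos (hθ n) (h1θ n)))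
      _ = 1 := key n
  refine ⟨fun n => ⟨hypos n, hyle n⟩, ?_, ?_, ?_, ?_⟩
  · intro n
    rw [hWhat n]
    exact psd_real_smul (hW n) (le_of_lt (hypos n))
  · rw [hQhat]
    exact hQ.add (psd_sum _ fun k => psd_real_smul (hW k) (by linarith [hyle k]))
  · rw [hQhat]
    simp only [hWhat]
    rw [add_comm Q, ← add_assoc, ← Finset.sum_add_distrib]
    congr 1
    apply Finset.sum_congr rfl
    intro k _
    rw [← add_smul]
    norm_num
  · intro n
    have ht := (htr n).ne'
    have hθ' := (hθ n).ne'
    have h1θ' := (h1θ n).ne'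
    have hLHS : (1 + θ n) / θ n * trR (H n) (What n) = S n := by
      rw [hWhat n, trR_smul, hy' n]
      field_simp
    have hQh : trR (H n) Qhat = trR (H n) Q + ∑ k, (1 - y k) * trR (H n) (W k) := by
      rw [hQhat, trR_add, trR_sum]
      simp only [trR_smul]
    have hsum : (∑ k, y k * trR (H n) (W k)) + ∑ k, (1 - y k) * trR (H n) (W k)
        = ∑ k, trR (H n) (W k) := by
      rw [← Finset.sum_add_distrib]
      apply Finset.sum_congr rfl
      intro k _; ring
    have hWsum : ∀ k, trR (H n) (What k) = y k * trR (H n) (W k) := fun k => by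
      rw [hWhat k, trR_smul]
    rw [hLHS, hQh]
    simp only [hWsum]
    have : S n = (∑ k, trR (H n) (W k)) + trR (H n) Q + σsq n := by rw [hS]
    linarith [hsum, this]
end

section
/- Let W be an n×n complex positive semidefinite matrix and h ∈ ℂⁿ with hᴴ W h > 0, and define W' := (W h)(W h)ᴴ/(hᴴ W h). Then W' is positive semidefinite with rank(W') ≤ 1, W − W' is positive semidefinite, and hᴴ W' h = hᴴ W h. -/
open Matrix
open scoped ComplexOrder

private lemma vecMulVec_mulVec' {n : ℕ} (x y v : Fin n → ℂ) :
    (Matrix.vecMulVec x y).mulVec v = (y ⬝ᵥ v) • x := by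
  ext i
  simp only [Matrix.mulVec, dotProduct, Matrix.vecMulVec_apply, Pi.smul_apply,
    smul_eq_mul, Finset.sum_mul]
  exact Finset.sum_congr rfl fun j _ => by ring

/-- Rank-one extraction underlying the rank-one recovery procedure of Proposition 3:
with `W' = (W h)(W h)ᴴ / (hᴴ W h)`, the matrix `W'` is positive semidefinite of rank at
most one, `W − W'` is positive semidefinite, and `hᴴ W' h = hᴴ W h`. -/
theorem rank_one_extraction {n : ℕ} (W : Matrix (Fin n) (Fin n) ℂ) (hW : W.PosSemidef)
    (h : Fin n → ℂ) (hpos : 0 < (star h ⬝ᵥ W.mulVec h).re)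
    (W' : Matrix (Fin n) (Fin n) ℂ)
    (hW' : W' = (star h ⬝ᵥ W.mulVec h)⁻¹ •
        Matrix.vecMulVec (W.mulVec h) (star (W.mulVec h))) :
    W'.PosSemidef ∧ W'.rank ≤ 1 ∧ (W - W').PosSemidef ∧
      star h ⬝ᵥ W'.mulVec h = star h ⬝ᵥ W.mulVec h := by
  set c : ℂ := star h ⬝ᵥ W.mulVec h with hc_def
  have hc0 : 0 ≤ c := hW.dotProduct_mulVec_nonneg h
  have him : c.im = 0 := (Complex.le_def.mp hc0).2.symm
  have hcr : c = (c.re : ℂ) := by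
    apply Complex.ext <;> simp [him]
  set r : ℝ := c.re with hr_def
  have hr : 0 < r := hpos
  have hcne : c ≠ 0 := by
    rw [hcr]; exact_mod_cast hr.ne'
  have hstarc : star c = c := by
    rw [hcr]; simp
  have hb : ∀ v : Fin n → ℂ, star (W.mulVec h) ⬝ᵥ v = star h ⬝ᵥ W.mulVec v := by
    intro v
    rw [star_mulVec, hW.1.eq, ← dotProduct_mulVec]
  have hsym : ∀ v : Fin n → ℂ, star v ⬝ᵥ W.mulVec h = star (star h ⬝ᵥ W.mulVec v) := by
    intro v
    have := congrArg star (hb v)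
    rwa [star_dotProduct, star_star] at this
  -- quadratic form of W'
  have hq : ∀ v : Fin n → ℂ, star v ⬝ᵥ W'.mulVec v
      = c⁻¹ * ((star h ⬝ᵥ W.mulVec v) * star (star h ⬝ᵥ W.mulVec v)) := by
    intro v
    rw [hW', smul_mulVec, vecMulVec_mulVec', dotProduct_smul, dotProduct_smul,
      hb v, smul_eq_mul, smul_eq_mul, hsym v]
  have hherm : W'.IsHermitian := by
    rw [hW']
    ext i j
    simp only [conjTranspose_apply, Matrix.smul_apply, vecMulVec_apply, smul_eq_mul, star_mul',
      Pi.star_apply, star_star, star_inv₀, hstarc]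
    ring
  have hW'psd : W'.PosSemidef := by
    refine PosSemidef.of_dotProduct_mulVec_nonneg hherm fun v => ?_
    rw [hq v]
    set b := star h ⬝ᵥ W.mulVec v
    have hbb : b * star b = (Complex.normSq b : ℂ) := by
      rw [Complex.star_def, Complex.mul_conj]
    rw [hbb, hcr, ← Complex.ofReal_inv, ← Complex.ofReal_mul, Complex.zero_le_real]
    exact mul_nonneg (inv_nonneg.mpr hr.le) (Complex.normSq_nonneg b)
  -- Cauchy–Schwarz : normSq b ≤ r * a.re
  have key : ∀ v : Fin n → ℂ, Complex.normSq (star h ⬝ᵥ W.mulVec v)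
      ≤ r * (star v ⬝ᵥ W.mulVec v).re := by
    intro v
    set b := star h ⬝ᵥ W.mulVec v with hbdef
    set a : ℂ := star v ⬝ᵥ W.mulVec v with hadef
    have ha0 : 0 ≤ a := hW.dotProduct_mulVec_nonneg v
    have haim : a.im = 0 := (Complex.le_def.mp ha0).2.symm
    have har : a = (a.re : ℂ) := by apply Complex.ext <;> simp [haim]
    have hu := hW.dotProduct_mulVec_nonneg (c • v - b • h)
    have hexp : star (c • v - b • h) ⬝ᵥ W.mulVec (c • v - b • h)
        = c * (c * a - b * star b) := by
      rw [mulVec_sub, mulVec_smul, mulVec_smul]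
      simp only [star_sub, star_smul, dotProduct_sub, sub_dotProduct, dotProduct_smul,
        smul_dotProduct, smul_eq_mul]
      rw [hsym v]
      simp only [← hc_def, ← hadef, ← hbdef, hstarc]
      ring
    rw [hexp] at hu
    have hbb : b * star b = (Complex.normSq b : ℂ) := by
      rw [Complex.star_def, Complex.mul_conj]
    rw [hbb, hcr, har] at hu
    have h2 : (0 : ℂ) ≤ ((r * (r * a.re - Complex.normSq b) : ℝ) : ℂ) := by
      convert hu using 1
      push_cast
      ring
    rw [Complex.zero_le_real] at h2
    have h3 : 0 ≤ r * a.re - Complex.normSq b := by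
      by_contra hneg
      push_neg at hneg
      nlinarith [h2]
    linarith
  have hsub : (W - W').PosSemidef := by
    refine PosSemidef.of_dotProduct_mulVec_nonneg (hW.1.sub hherm) fun v => ?_
    rw [sub_mulVec, dotProduct_sub, hq v]
    set b := star h ⬝ᵥ W.mulVec v with hbdef
    set a : ℂ := star v ⬝ᵥ W.mulVec v with hadef
    have ha0 : 0 ≤ a := hW.dotProduct_mulVec_nonneg v
    have haim : a.im = 0 := (Complex.le_def.mp ha0).2.symm
    have har : a = (a.re : ℂ) := by apply Complex.ext <;> simp [haim]
    have hbb : b * star b = (Complex.normSq b : ℂ) := by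
      rw [Complex.star_def, Complex.mul_conj]
    rw [hbb, hcr, har, ← Complex.ofReal_inv, ← Complex.ofReal_mul,
      ← Complex.ofReal_sub, Complex.zero_le_real]
    have hk := key v
    have h2 : r⁻¹ * Complex.normSq b ≤ r⁻¹ * (r * (star v ⬝ᵥ W.mulVec v).re) :=
      mul_le_mul_of_nonneg_left hk (inv_nonneg.mpr hr.le)
    have h3 : r⁻¹ * (r * (star v ⬝ᵥ W.mulVec v).re) = a.re := by
      rw [← hadef]; field_simp
    linarith
  have hrank : W'.rank ≤ 1 := by
    have : W' = (c⁻¹ • Matrix.replicateCol (Fin 1) (W.mulVec h)) * Matrix.replicateRow (Fin 1) (star (W.mulVec h)) := by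
      rw [hW', vecMulVec_eq (Fin 1), Matrix.smul_mul]
      rfl
    calc W'.rank ≤ (c⁻¹ • Matrix.replicateCol (Fin 1) (W.mulVec h)).rank := by
          rw [this]; exact rank_mul_le_left _ _
      _ ≤ Fintype.card (Fin 1) := rank_le_card_width _
      _ = 1 := by simp
  refine ⟨hW'psd, hrank, hsub, ?_⟩
  rw [hq h, ← hc_def, hstarc]
  field_simp
end

section
/- (Equivalence of problems (15) and (21), first direction) Let (W_1,…,W_N, Q, t) be feasible for problem (21) with t ≥ 0. Define y_n := (θ_n(t)/(1+θ_n(t))) · (Tr(H_n(Σ_{k=1}^N W_k + Q)) + σ_{u,n}²)/Tr(H_n W_n), Ŵ_n := y_n W_n and Q̂ := Q + Σ_{k=1}^N (1 − y_k) W_k. Then (Ŵ_1,…,Ŵ_N, Q̂) is feasible for problem (15), its secrecy rates satisfy R̂^SEC_{u,n} = φ_n t for every n, and its secrecy energy efficiency equals t/P^TOT(W_1,…,W_N,Q); in particular the optimal value of (15) is at least t/P^TOT(W_1,…,W_N,Q). -/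
open Matrix
open scoped ComplexOrder

/-- Euclidean (Frobenius) norm on ℂ^{N_t}. -/
noncomputable def enorm' {n : ℕ} (v : Fin n → ℂ) : ℝ :=
  Real.sqrt (∑ i, ‖v i‖ ^ 2)

/-- Outer product channel matrix `H_n = h_n h_nᴴ`. -/
noncomputable def Hmat {N Nt : ℕ} (h : Fin N → Fin Nt → ℂ) (n : Fin N) :
    Matrix (Fin Nt) (Fin Nt) ℂ :=
  Matrix.vecMulVec (h n) (star (h n))

/-- Data rate `R_{u,n}` of user `n`. -/
noncomputable def Ru {N Nt : ℕ} (h : Fin N → Fin Nt → ℂ) (σsq : Fin N → ℝ) (BW : ℝ)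
    (W : Fin N → Matrix (Fin Nt) (Fin Nt) ℂ) (Q : Matrix (Fin Nt) (Fin Nt) ℂ)
    (n : Fin N) : ℝ :=
  BW * Real.log (1 + trR (Hmat h n) (W n) /
    ((∑ k ∈ Finset.univ.erase n, trR (Hmat h n) (W k)) + trR (Hmat h n) Q + σsq n))

/-- Secrecy rate `R^SEC_{u,n}` of user `n`. -/
noncomputable def Rsec {N Nt : ℕ} (h : Fin N → Fin Nt → ℂ) (σsq : Fin N → ℝ) (BW : ℝ)
    (Rreq : Fin N → ℝ) (W : Fin N → Matrix (Fin Nt) (Fin Nt) ℂ)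
    (Q : Matrix (Fin Nt) (Fin Nt) ℂ) (n : Fin N) : ℝ :=
  max (Ru h σsq BW W Q n - Rreq n) 0

/-- Total power consumption `P^TOT`. -/
noncomputable def Ptot {N Nt : ℕ} (φamp Pcir : ℝ)
    (W : Fin N → Matrix (Fin Nt) (Fin Nt) ℂ) (Q : Matrix (Fin Nt) (Fin Nt) ℂ) : ℝ :=
  (1 / φamp) * ((∑ n, (Matrix.trace (W n)).re) + (Matrix.trace Q).re) + Pcir

/-- Secrecy energy efficiency `SEE`. -/
noncomputable def SEE {N Nt : ℕ} (h : Fin N → Fin Nt → ℂ) (σsq : Fin N → ℝ) (BW : ℝ)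
    (Rreq : Fin N → ℝ) (φamp Pcir : ℝ)
    (W : Fin N → Matrix (Fin Nt) (Fin Nt) ℂ) (Q : Matrix (Fin Nt) (Fin Nt) ℂ) : ℝ :=
  (∑ n, Rsec h σsq BW Rreq W Q n) / Ptot φamp Pcir W Q

/-- The robust information-leakage constraint for all pairs `(m, n)`. -/
def LeakOK {N Nt M : ℕ} (BW : ℝ) (Rreq : Fin N → ℝ)
    (ge : Fin M → Fin Nt → ℂ) (Θe σe : Fin M → ℝ)
    (W : Fin N → Matrix (Fin Nt) (Fin Nt) ℂ) (Q : Matrix (Fin Nt) (Fin Nt) ℂ) : Prop :=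
  ∀ m n, ∀ Δ : Fin Nt → ℂ, enorm' Δ ≤ Θe m →
    (star (ge m + Δ) ⬝ᵥ
      (((1 / (1 - Real.exp (-(Rreq n / BW))) : ℝ) : ℂ) • W n - (∑ k, W k) - Q).mulVec
        (ge m + Δ)).re ≤ σe m

/-- The robust energy-harvesting constraint for all `i`. -/
def EHOK {Nt I : ℕ} (gh : Fin I → Fin Nt → ℂ) (Θh Preq ξ : Fin I → ℝ)
    {N : ℕ} (W : Fin N → Matrix (Fin Nt) (Fin Nt) ℂ)
    (Q : Matrix (Fin Nt) (Fin Nt) ℂ) : Prop :=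
  ∀ i, ∀ Δ : Fin Nt → ℂ, enorm' Δ ≤ Θh i →
    Preq i / ξ i ≤ (star (gh i + Δ) ⬝ᵥ ((∑ k, W k) + Q).mulVec (gh i + Δ)).re

/-- Feasibility for problem (15). -/
noncomputable def Feasible15 {N Nt M I : ℕ}
    (h : Fin N → Fin Nt → ℂ) (σsq : Fin N → ℝ) (BW : ℝ) (φv Rreq : Fin N → ℝ)
    (ge : Fin M → Fin Nt → ℂ) (Θe σe : Fin M → ℝ)
    (gh : Fin I → Fin Nt → ℂ) (Θh Preq ξ : Fin I → ℝ) (Pmax : ℝ)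
    (W : Fin N → Matrix (Fin Nt) (Fin Nt) ℂ) (Q : Matrix (Fin Nt) (Fin Nt) ℂ) : Prop :=
  (∀ n, (W n).PosSemidef) ∧ Q.PosSemidef ∧
  (∀ n, (W n).rank ≤ 1) ∧
  (∀ m n, φv m * Rsec h σsq BW Rreq W Q n = φv n * Rsec h σsq BW Rreq W Q m) ∧
  LeakOK BW Rreq ge Θe σe W Q ∧
  EHOK gh Θh Preq ξ W Q ∧
  (∑ n, (Matrix.trace (W n)).re) + (Matrix.trace Q).re ≤ Pmax

/-- Feasibility for problem (21). -/
noncomputable def Feasible21 {N Nt M I : ℕ}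
    (h : Fin N → Fin Nt → ℂ) (σsq : Fin N → ℝ) (BW : ℝ) (φv Rreq : Fin N → ℝ)
    (ge : Fin M → Fin Nt → ℂ) (Θe σe : Fin M → ℝ)
    (gh : Fin I → Fin Nt → ℂ) (Θh Preq ξ : Fin I → ℝ) (Pmax : ℝ)
    (W : Fin N → Matrix (Fin Nt) (Fin Nt) ℂ) (Q : Matrix (Fin Nt) (Fin Nt) ℂ)
    (t : ℝ) : Prop :=
  (∀ n, (W n).PosSemidef) ∧ Q.PosSemidef ∧
  (∀ n, (W n).rank ≤ 1) ∧
  (∀ n, ((1 + (Real.exp (φv n * t / BW + Rreq n / BW) - 1)) /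
        (Real.exp (φv n * t / BW + Rreq n / BW) - 1)) * trR (Hmat h n) (W n) ≥
      (∑ k, trR (Hmat h n) (W k)) + trR (Hmat h n) Q + σsq n) ∧
  LeakOK BW Rreq ge Θe σe W Q ∧
  EHOK gh Θh Preq ξ W Q ∧
  (∑ n, (Matrix.trace (W n)).re) + (Matrix.trace Q).re ≤ Pmax


namespace SEEaux
variable {Nt : ℕ}

lemma trace_vecMulVec_mul (u v : Fin Nt → ℂ) (A : Matrix (Fin Nt) (Fin Nt) ℂ) :
    Matrix.trace (Matrix.vecMulVec u v * A) = v ⬝ᵥ A.mulVec u := by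
  simp only [Matrix.trace, Matrix.diag, Matrix.mul_apply, Matrix.vecMulVec_apply,
    dotProduct, Matrix.mulVec]
  rw [Finset.sum_comm]
  simp_rw [Finset.mul_sum]
  exact Finset.sum_congr rfl fun j _ => Finset.sum_congr rfl fun i _ => by ring

lemma quad_re_nonneg {A : Matrix (Fin Nt) (Fin Nt) ℂ} (hA : A.PosSemidef) (x : Fin Nt → ℂ) :
    0 ≤ (star x ⬝ᵥ A.mulVec x).re := by
  have := hA.dotProduct_mulVec_nonneg x
  rw [Complex.le_def] at this
  simpa using this.1

lemma quadre_smul (r : ℝ) (A : Matrix (Fin Nt) (Fin Nt) ℂ) (z : Fin Nt → ℂ) :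
    (star z ⬝ᵥ ((r : ℂ) • A).mulVec z).re = r * (star z ⬝ᵥ A.mulVec z).re := by
  rw [Matrix.smul_mulVec, dotProduct_smul, smul_eq_mul, Complex.re_ofReal_mul]

lemma quadre_sub (A B : Matrix (Fin Nt) (Fin Nt) ℂ) (z : Fin Nt → ℂ) :
    (star z ⬝ᵥ (A - B).mulVec z).re
      = (star z ⬝ᵥ A.mulVec z).re - (star z ⬝ᵥ B.mulVec z).re := by
  rw [Matrix.sub_mulVec, dotProduct_sub, Complex.sub_re]

lemma quadre_add (A B : Matrix (Fin Nt) (Fin Nt) ℂ) (z : Fin Nt → ℂ) :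
    (star z ⬝ᵥ (A + B).mulVec z).re
      = (star z ⬝ᵥ A.mulVec z).re + (star z ⬝ᵥ B.mulVec z).re := by
  rw [Matrix.add_mulVec, dotProduct_add, Complex.add_re]

lemma trace_re_nonneg {A : Matrix (Fin Nt) (Fin Nt) ℂ} (hA : A.PosSemidef) :
    0 ≤ (Matrix.trace A).re := by
  rw [Matrix.trace, Complex.re_sum]
  refine Finset.sum_nonneg fun i _ => ?_
  have h := quad_re_nonneg hA (Pi.single i 1)
  simpa [Matrix.mulVec_single, dotProduct, Pi.single_apply, Matrix.diag, apply_ite] using h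

lemma quad_re_le {A : Matrix (Fin Nt) (Fin Nt) ℂ} (hA : A.PosSemidef) (x : Fin Nt → ℂ) :
    (star x ⬝ᵥ A.mulVec x).re ≤ (∑ i, ‖x i‖ ^ 2) * (Matrix.trace A).re := by
  obtain ⟨B, rfl⟩ : ∃ B : Matrix (Fin Nt) (Fin Nt) ℂ, A = Bᴴ * B := by
    open scoped MatrixOrder Matrix.Norms.L2Operator in
    exact CStarAlgebra.nonneg_iff_eq_star_mul_self.mp hA.nonneg
  rw [← Matrix.mulVec_mulVec, Matrix.dotProduct_mulVec, Matrix.vecMul_conjTranspose, star_star]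
  have hL : (star (B.mulVec x) ⬝ᵥ B.mulVec x).re = ∑ i, ‖B.mulVec x i‖ ^ 2 := by
    simp [dotProduct, Complex.re_sum, ← Complex.normSq_eq_norm_sq, Complex.normSq_eq_conj_mul_self,
      Complex.sq_norm, Complex.normSq_apply]
  rw [hL]
  have htr : (Matrix.trace (Bᴴ * B)).re = ∑ i, ∑ j, ‖B j i‖ ^ 2 := by
    simp [Matrix.trace, Matrix.diag, Matrix.mul_apply, Complex.re_sum,
      Matrix.conjTranspose_apply, ← Complex.normSq_eq_norm_sq, Complex.normSq_eq_conj_mul_self,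
      Complex.sq_norm, Complex.normSq_apply]
  rw [htr]
  have hCS : ∀ i, ‖B.mulVec x i‖ ^ 2 ≤ (∑ j, ‖B i j‖ ^ 2) * (∑ j, ‖x j‖ ^ 2) := by
    intro i
    have hmv : B.mulVec x i = ∑ j, B i j * x j := by simp [Matrix.mulVec, dotProduct]
    have h1 : ‖B.mulVec x i‖ ≤ ∑ j, ‖B i j‖ * ‖x j‖ := by
      rw [hmv]
      refine le_trans (norm_sum_le _ _) ?_
      exact le_of_eq (Finset.sum_congr rfl fun j _ => norm_mul _ _)
    have h2 : (∑ j, ‖B i j‖ * ‖x j‖) ^ 2 ≤ (∑ j, ‖B i j‖ ^ 2) * (∑ j, ‖x j‖ ^ 2) :=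
      Finset.sum_mul_sq_le_sq_mul_sq _ _ _
    calc ‖B.mulVec x i‖ ^ 2 ≤ (∑ j, ‖B i j‖ * ‖x j‖) ^ 2 := by
          apply pow_le_pow_left₀ (norm_nonneg _) h1
      _ ≤ _ := h2
  calc ∑ i, ‖B.mulVec x i‖ ^ 2 ≤ ∑ i, (∑ j, ‖B i j‖ ^ 2) * (∑ j, ‖x j‖ ^ 2) :=
        Finset.sum_le_sum fun i _ => hCS i
    _ = (∑ j, ‖x j‖ ^ 2) * ∑ i, ∑ j, ‖B j i‖ ^ 2 := by
        rw [← Finset.sum_mul, Finset.sum_comm]; ring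


end SEEaux

namespace SEEaux2
open SEEaux
variable {Nt N : ℕ}

lemma trR_quad (h : Fin N → Fin Nt → ℂ) (n : Fin N) (A : Matrix (Fin Nt) (Fin Nt) ℂ) :
    trR (Hmat h n) A = (star (h n) ⬝ᵥ A.mulVec (h n)).re := by
  rw [trR, Hmat, trace_vecMulVec_mul]

lemma trR_nonneg (h : Fin N → Fin Nt → ℂ) (n : Fin N) {A : Matrix (Fin Nt) (Fin Nt) ℂ}
    (hA : A.PosSemidef) : 0 ≤ trR (Hmat h n) A := by
  rw [trR_quad]; exact quad_re_nonneg hA _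

lemma trR_le (h : Fin N → Fin Nt → ℂ) (n : Fin N) {A : Matrix (Fin Nt) (Fin Nt) ℂ}
    (hA : A.PosSemidef) :
    trR (Hmat h n) A ≤ (∑ i, ‖h n i‖ ^ 2) * (Matrix.trace A).re := by
  rw [trR_quad]; exact quad_re_le hA _

lemma trR_add (H A B : Matrix (Fin Nt) (Fin Nt) ℂ) :
    trR H (A + B) = trR H A + trR H B := by
  rw [trR, trR, trR, mul_add, Matrix.trace_add, Complex.add_re]

lemma trR_smul (H : Matrix (Fin Nt) (Fin Nt) ℂ) (r : ℝ) (A : Matrix (Fin Nt) (Fin Nt) ℂ) :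
    trR H ((r : ℂ) • A) = r * trR H A := by
  rw [trR, trR, Matrix.mul_smul, Matrix.trace_smul, smul_eq_mul, Complex.re_ofReal_mul]

lemma trR_sum {ι : Type*} (s : Finset ι) (H : Matrix (Fin Nt) (Fin Nt) ℂ)
    (f : ι → Matrix (Fin Nt) (Fin Nt) ℂ) :
    trR H (∑ k ∈ s, f k) = ∑ k ∈ s, trR H (f k) := by
  rw [trR, Finset.mul_sum, Matrix.trace_sum, Complex.re_sum]
  rfl

lemma psd_smul {A : Matrix (Fin Nt) (Fin Nt) ℂ} (hA : A.PosSemidef) {r : ℝ} (hr : 0 ≤ r) :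
    ((r : ℂ) • A).PosSemidef := by
  refine Matrix.PosSemidef.of_dotProduct_mulVec_nonneg ?_ ?_
  · show ((r : ℂ) • A)ᴴ = (r : ℂ) • A
    rw [Matrix.conjTranspose_smul, hA.1.eq]
    congr 1
    simp [Complex.star_def, Complex.conj_ofReal]
  · intro v
    rw [Matrix.smul_mulVec, dotProduct_smul, smul_eq_mul]
    refine mul_nonneg ?_ (hA.dotProduct_mulVec_nonneg v)
    rw [Complex.le_def]
    simp [hr]

lemma psd_sum {ι : Type*} (s : Finset ι) (f : ι → Matrix (Fin Nt) (Fin Nt) ℂ)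
    (hf : ∀ k ∈ s, (f k).PosSemidef) : (∑ k ∈ s, f k).PosSemidef := by
  classical
  induction s using Finset.induction_on with
  | empty => simpa using (Matrix.PosSemidef.zero : (0 : Matrix (Fin Nt) (Fin Nt) ℂ).PosSemidef)
  | insert a s hx ih =>
      rw [Finset.sum_insert hx]
      exact (hf _ (Finset.mem_insert_self _ _)).add
        (ih fun k hk => hf k (Finset.mem_insert_of_mem hk))

lemma rank_smul_le (c : ℂ) (A : Matrix (Fin Nt) (Fin Nt) ℂ) : (c • A).rank ≤ A.rank := by
  have h : c • A = (c • (1 : Matrix (Fin Nt) (Fin Nt) ℂ)) * A := by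
    rw [Matrix.smul_mul, one_mul]
  rw [h]
  exact Matrix.rank_mul_le_right _ _

end SEEaux2

/-- Equivalence of problems (15) and (21), first direction: scaling a feasible point of
(21) yields a feasible point of (15) whose secrecy rates are exactly `φ_n t` and whose
secrecy energy efficiency equals `t / P^TOT`; in particular the optimal value of (15) is
at least `t / P^TOT`. -/
theorem equiv_15_21_first_direction {N Nt M I : ℕ} (hN : 0 < N) (hNt : 0 < Nt)
    (h : Fin N → Fin Nt → ℂ) (σsq : Fin N → ℝ) (hσ : ∀ n, 0 < σsq n)
    (BW : ℝ) (hBW : 0 < BW)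
    (φv : Fin N → ℝ) (hφ : ∀ n, 0 < φv n) (hφsum : ∑ n, φv n = 1)
    (Rreq : Fin N → ℝ) (hRreq : ∀ n, 0 < Rreq n)
    (ge : Fin M → Fin Nt → ℂ) (Θe : Fin M → ℝ) (hΘe : ∀ m, 0 < Θe m)
    (σe : Fin M → ℝ) (hσe : ∀ m, 0 < σe m)
    (gh : Fin I → Fin Nt → ℂ) (Θh : Fin I → ℝ) (hΘh : ∀ i, 0 < Θh i)
    (Preq : Fin I → ℝ) (hPreq : ∀ i, 0 < Preq i)
    (ξ : Fin I → ℝ) (hξ : ∀ i, 0 < ξ i ∧ ξ i ≤ 1)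
    (Pmax : ℝ) (hPmax : 0 < Pmax)
    (φamp : ℝ) (hφamp : 0 < φamp ∧ φamp ≤ 1) (Pcir : ℝ) (hPcir : 0 < Pcir)
    (W : Fin N → Matrix (Fin Nt) (Fin Nt) ℂ) (Q : Matrix (Fin Nt) (Fin Nt) ℂ)
    (t : ℝ) (ht : 0 ≤ t)
    (hfeas : Feasible21 h σsq BW φv Rreq ge Θe σe gh Θh Preq ξ Pmax W Q t)
    (y : Fin N → ℝ)
    (hy : ∀ n, y n = ((Real.exp (φv n * t / BW + Rreq n / BW) - 1) /
        (1 + (Real.exp (φv n * t / BW + Rreq n / BW) - 1))) *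
        ((trR (Hmat h n) ((∑ k, W k) + Q) + σsq n) / trR (Hmat h n) (W n)))
    (What : Fin N → Matrix (Fin Nt) (Fin Nt) ℂ)
    (hWhat : ∀ n, What n = (y n : ℂ) • W n)
    (Qhat : Matrix (Fin Nt) (Fin Nt) ℂ)
    (hQhat : Qhat = Q + ∑ k, ((1 - y k : ℝ) : ℂ) • W k) :
    Feasible15 h σsq BW φv Rreq ge Θe σe gh Θh Preq ξ Pmax What Qhat ∧
    (∀ n, Rsec h σsq BW Rreq What Qhat n = φv n * t) ∧
    SEE h σsq BW Rreq φamp Pcir What Qhat = t / Ptot φamp Pcir W Q ∧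
    t / Ptot φamp Pcir W Q ≤
      sSup {s : ℝ | ∃ W' Q', Feasible15 h σsq BW φv Rreq ge Θe σe gh Θh Preq ξ Pmax W' Q' ∧
        s = SEE h σsq BW Rreq φamp Pcir W' Q'} := by
  classical
  obtain ⟨hWpsd, hQpsd, hWrank, h20, hLeak, hEH, hPow⟩ := hfeas
  have hBW' : BW ≠ 0 := ne_of_gt hBW
  have hEpos : ∀ n, 0 < φv n * t / BW + Rreq n / BW := fun n =>
    add_pos_of_nonneg_of_pos (div_nonneg (mul_nonneg (hφ n).le ht) hBW.le)
      (div_pos (hRreq n) hBW)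
  have hb1 : ∀ n, 1 < Real.exp (φv n * t / BW + Rreq n / BW) := by
    intro n
    have h1 : Real.exp 0 < Real.exp (φv n * t / BW + Rreq n / BW) :=
      Real.exp_lt_exp.mpr (hEpos n)
    rwa [Real.exp_zero] at h1
  have hapos : ∀ n, 0 < Real.exp (φv n * t / BW + Rreq n / BW) - 1 :=
    fun n => sub_pos.mpr (hb1 n)
  have hbpos : ∀ n, (0:ℝ) < Real.exp (φv n * t / BW + Rreq n / BW) :=
    fun n => Real.exp_pos _
  -- abbreviations
  have hSx : ∀ n, trR (Hmat h n) ((∑ k, W k) + Q) + σsq n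
      = (∑ k, trR (Hmat h n) (W k)) + trR (Hmat h n) Q + σsq n := fun n => by
    rw [SEEaux2.trR_add, SEEaux2.trR_sum]
  have hSpos : ∀ n, 0 < trR (Hmat h n) ((∑ k, W k) + Q) + σsq n := by
    intro n
    have h1 : 0 ≤ trR (Hmat h n) ((∑ k, W k) + Q) :=
      SEEaux2.trR_nonneg h n ((SEEaux2.psd_sum _ _ fun k _ => hWpsd k).add hQpsd)
    linarith [hσ n]
  have h20' : ∀ n, (Real.exp (φv n * t / BW + Rreq n / BW) - 1)
        * (trR (Hmat h n) ((∑ k, W k) + Q) + σsq n)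
      ≤ Real.exp (φv n * t / BW + Rreq n / BW) * trR (Hmat h n) (W n) := by
    intro n
    have h1 := h20 n
    rw [ge_iff_le, ← hSx n, div_mul_eq_mul_div, le_div_iff₀ (hapos n)] at h1
    nlinarith [h1]
  have hxpos : ∀ n, 0 < trR (Hmat h n) (W n) := by
    intro n
    have h1 := h20' n
    have h2 : 0 ≤ trR (Hmat h n) (W n) := SEEaux2.trR_nonneg h n (hWpsd n)
    rcases lt_or_eq_of_le h2 with h3 | h3
    · exact h3
    · exfalso
      nlinarith [hapos n, hSpos n]
  have hyval : ∀ n, y n * trR (Hmat h n) (W n)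
      = ((Real.exp (φv n * t / BW + Rreq n / BW) - 1)
          / Real.exp (φv n * t / BW + Rreq n / BW))
        * (trR (Hmat h n) ((∑ k, W k) + Q) + σsq n) := by
    intro n
    rw [hy n]
    have h1 : (1:ℝ) + (Real.exp (φv n * t / BW + Rreq n / BW) - 1)
        = Real.exp (φv n * t / BW + Rreq n / BW) := by ring
    rw [h1]
    field_simp [(hxpos n).ne', (Real.exp_pos (φv n * t / BW + Rreq n / BW)).ne']
  have hy_pos : ∀ n, 0 < y n := by
    intro n
    rw [hy n]
    exact mul_pos (div_pos (hapos n) (by linarith [hapos n]))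
      (div_pos (hSpos n) (hxpos n))
  have hy_le1 : ∀ n, y n ≤ 1 := by
    intro n
    have h1 := h20' n
    rw [hy n]
    rw [div_mul_div_comm, div_le_one (mul_pos (by linarith [hapos n]) (hxpos n))]
    nlinarith [h1]
  -- key sum identity
  have hsum : (∑ k, What k) + Qhat = (∑ k, W k) + Q := by
    simp only [hWhat, hQhat]
    rw [add_comm Q, ← add_assoc, ← Finset.sum_add_distrib]
    congr 1
    refine Finset.sum_congr rfl fun k _ => ?_
    have hone : (y k : ℂ) + ((1 - y k : ℝ) : ℂ) = 1 := by push_cast; ring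
    rw [← add_smul, hone, one_smul]
  have hWhat_psd : ∀ n, (What n).PosSemidef := by
    intro n; rw [hWhat n]; exact SEEaux2.psd_smul (hWpsd n) (hy_pos n).le
  have hQhat_psd : Qhat.PosSemidef := by
    rw [hQhat]
    exact hQpsd.add (SEEaux2.psd_sum _ _ fun k _ =>
      SEEaux2.psd_smul (hWpsd k) (by linarith [hy_le1 k]))
  have hrank : ∀ n, (What n).rank ≤ 1 := by
    intro n; rw [hWhat n]
    exact le_trans (SEEaux2.rank_smul_le _ _) (hWrank n)
  have htrWhat : ∀ (n k : Fin N), trR (Hmat h n) (What k) = y k * trR (Hmat h n) (W k) :=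
    fun n k => by rw [hWhat k, SEEaux2.trR_smul]
  have hden : ∀ n, (∑ k ∈ Finset.univ.erase n, trR (Hmat h n) (What k))
        + trR (Hmat h n) Qhat + σsq n
      = (trR (Hmat h n) ((∑ k, W k) + Q) + σsq n) - y n * trR (Hmat h n) (W n) := by
    intro n
    have e1 : (∑ k ∈ Finset.univ.erase n, trR (Hmat h n) (What k))
        = (∑ k, trR (Hmat h n) (What k)) - trR (Hmat h n) (What n) :=
      Finset.sum_erase_eq_sub (Finset.mem_univ n)
    have e2 : (∑ k, trR (Hmat h n) (What k)) + trR (Hmat h n) Qhat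
        = trR (Hmat h n) ((∑ k, W k) + Q) := by
      rw [← SEEaux2.trR_sum, ← SEEaux2.trR_add, hsum]
    rw [e1, htrWhat n n]
    linarith [e2]
  have hRu : ∀ n, Ru h σsq BW What Qhat n = φv n * t + Rreq n := by
    intro n
    unfold Ru
    rw [hden n, htrWhat n n, hyval n]
    have hT := hSpos n
    have he := hbpos n
    have ha := hapos n
    have harg : 1 + ((Real.exp (φv n * t / BW + Rreq n / BW) - 1)
          / Real.exp (φv n * t / BW + Rreq n / BW))
        * (trR (Hmat h n) ((∑ k, W k) + Q) + σsq n)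
        / ((trR (Hmat h n) ((∑ k, W k) + Q) + σsq n)
          - ((Real.exp (φv n * t / BW + Rreq n / BW) - 1)
            / Real.exp (φv n * t / BW + Rreq n / BW))
          * (trR (Hmat h n) ((∑ k, W k) + Q) + σsq n))
        = Real.exp (φv n * t / BW + Rreq n / BW) := by
      have hrem : (trR (Hmat h n) ((∑ k, W k) + Q) + σsq n)
          - ((Real.exp (φv n * t / BW + Rreq n / BW) - 1)
            / Real.exp (φv n * t / BW + Rreq n / BW))
          * (trR (Hmat h n) ((∑ k, W k) + Q) + σsq n)
          = (trR (Hmat h n) ((∑ k, W k) + Q) + σsq n)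
            / Real.exp (φv n * t / BW + Rreq n / BW) := by
        field_simp
        ring
      rw [hrem]
      have h3 : (Real.exp (φv n * t / BW + Rreq n / BW) - 1)
            / Real.exp (φv n * t / BW + Rreq n / BW)
          * (trR (Hmat h n) ((∑ k, W k) + Q) + σsq n)
          / ((trR (Hmat h n) ((∑ k, W k) + Q) + σsq n)
            / Real.exp (φv n * t / BW + Rreq n / BW))
          = Real.exp (φv n * t / BW + Rreq n / BW) - 1 := by
        rw [div_eq_iff (div_pos hT he).ne']
        field_simp
      rw [h3]
      ring
    rw [harg, Real.log_exp]
    field_simp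
  have hRsec : ∀ n, Rsec h σsq BW Rreq What Qhat n = φv n * t := by
    intro n
    unfold Rsec
    rw [hRu n, add_sub_cancel_right]
    exact max_eq_left (mul_nonneg (hφ n).le ht)
  have htr : (∑ n, (Matrix.trace (What n)).re) + (Matrix.trace Qhat).re
      = (∑ n, (Matrix.trace (W n)).re) + (Matrix.trace Q).re := by
    have h1 := congrArg (fun A : Matrix (Fin Nt) (Fin Nt) ℂ => (Matrix.trace A).re) hsum
    simpa [Matrix.trace_add, Matrix.trace_sum, Complex.add_re, Complex.re_sum] using h1
  have hLeak' : LeakOK BW Rreq ge Θe σe What Qhat := by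
    intro m n Δ hΔ
    have hold := hLeak m n Δ hΔ
    have hcpos : 0 < (1 / (1 - Real.exp (-(Rreq n / BW))) : ℝ) := by
      have h1 : Real.exp (-(Rreq n / BW)) < 1 :=
        Real.exp_lt_one_iff.mpr (neg_lt_zero.mpr (div_pos (hRreq n) hBW))
      exact div_pos one_pos (by linarith)
    have split : ∀ (V : Fin N → Matrix (Fin Nt) (Fin Nt) ℂ)
        (R : Matrix (Fin Nt) (Fin Nt) ℂ),
        (star (ge m + Δ) ⬝ᵥ
          (((1 / (1 - Real.exp (-(Rreq n / BW))) : ℝ) : ℂ) • V n - (∑ k, V k) - R).mulVec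
            (ge m + Δ)).re
        = (1 / (1 - Real.exp (-(Rreq n / BW))) : ℝ)
            * (star (ge m + Δ) ⬝ᵥ (V n).mulVec (ge m + Δ)).re
          - (star (ge m + Δ) ⬝ᵥ ((∑ k, V k) + R).mulVec (ge m + Δ)).re := by
      intro V R
      rw [sub_sub, SEEaux.quadre_sub, SEEaux.quadre_smul]
    rw [split] at hold ⊢
    rw [hsum]
    have hWn : (star (ge m + Δ) ⬝ᵥ (What n).mulVec (ge m + Δ)).re
        = y n * (star (ge m + Δ) ⬝ᵥ (W n).mulVec (ge m + Δ)).re := by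
      rw [hWhat n, SEEaux.quadre_smul]
    rw [hWn]
    have fW : 0 ≤ (star (ge m + Δ) ⬝ᵥ (W n).mulVec (ge m + Δ)).re :=
      SEEaux.quad_re_nonneg (hWpsd n) _
    nlinarith [mul_nonneg (mul_nonneg hcpos.le (sub_nonneg.2 (hy_le1 n))) fW]
  have hEH' : EHOK gh Θh Preq ξ What Qhat := by
    intro i Δ hΔ
    rw [hsum]
    exact hEH i Δ hΔ
  have hPow' : (∑ n, (Matrix.trace (What n)).re) + (Matrix.trace Qhat).re ≤ Pmax := by
    rw [htr]; exact hPow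
  have hprop : ∀ m n, φv m * Rsec h σsq BW Rreq What Qhat n
      = φv n * Rsec h σsq BW Rreq What Qhat m := by
    intro m n; rw [hRsec n, hRsec m]; ring
  have hfeas15 : Feasible15 h σsq BW φv Rreq ge Θe σe gh Θh Preq ξ Pmax What Qhat :=
    ⟨hWhat_psd, hQhat_psd, hrank, hprop, hLeak', hEH', hPow'⟩
  have hPtot : Ptot φamp Pcir What Qhat = Ptot φamp Pcir W Q := by
    unfold Ptot; rw [htr]
  have hSEE : SEE h σsq BW Rreq φamp Pcir What Qhat = t / Ptot φamp Pcir W Q := by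
    unfold SEE
    rw [hPtot]
    congr 1
    rw [Finset.sum_congr rfl fun n _ => hRsec n, ← Finset.sum_mul, hφsum, one_mul]
  refine ⟨hfeas15, hRsec, hSEE, le_csSup ?_ ⟨What, Qhat, hfeas15, hSEE.symm⟩⟩
  -- Bounded above
  refine ⟨(∑ n, BW * Real.log (1 + (∑ i, ‖h n i‖ ^ 2) * Pmax / σsq n)) / Pcir, ?_⟩
  rintro s ⟨W', Q', hf, rfl⟩
  obtain ⟨hW'psd, hQ'psd, -, -, -, -, hPow''⟩ := hf
  have hnumnn : 0 ≤ ∑ n, Rsec h σsq BW Rreq W' Q' n :=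
    Finset.sum_nonneg fun n _ => le_max_right _ _
  have hub : ∀ n, Rsec h σsq BW Rreq W' Q' n
      ≤ BW * Real.log (1 + (∑ i, ‖h n i‖ ^ 2) * Pmax / σsq n) := by
    intro n
    have hK : 0 ≤ ∑ i, ‖h n i‖ ^ 2 := Finset.sum_nonneg fun i _ => sq_nonneg _
    have htrQ' : 0 ≤ (Matrix.trace Q').re := SEEaux.trace_re_nonneg hQ'psd
    have htrW' : (Matrix.trace (W' n)).re ≤ Pmax := by
      have h3 : (Matrix.trace (W' n)).re ≤ ∑ k, (Matrix.trace (W' k)).re :=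
        Finset.single_le_sum (fun k _ => SEEaux.trace_re_nonneg (hW'psd k))
          (Finset.mem_univ n)
      linarith
    have hxb : trR (Hmat h n) (W' n) ≤ (∑ i, ‖h n i‖ ^ 2) * Pmax :=
      le_trans (SEEaux2.trR_le h n (hW'psd n))
        (mul_le_mul_of_nonneg_left htrW' hK)
    have hx0 : 0 ≤ trR (Hmat h n) (W' n) := SEEaux2.trR_nonneg h n (hW'psd n)
    have hd : σsq n ≤ (∑ k ∈ Finset.univ.erase n, trR (Hmat h n) (W' k))
        + trR (Hmat h n) Q' + σsq n := by
      have h1 : 0 ≤ ∑ k ∈ Finset.univ.erase n, trR (Hmat h n) (W' k) :=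
        Finset.sum_nonneg fun k _ => SEEaux2.trR_nonneg h n (hW'psd k)
      have h2 : 0 ≤ trR (Hmat h n) Q' := SEEaux2.trR_nonneg h n hQ'psd
      linarith
    have hfrac : trR (Hmat h n) (W' n)
        / ((∑ k ∈ Finset.univ.erase n, trR (Hmat h n) (W' k))
          + trR (Hmat h n) Q' + σsq n)
        ≤ (∑ i, ‖h n i‖ ^ 2) * Pmax / σsq n :=
      div_le_div₀ (mul_nonneg hK hPmax.le) hxb (hσ n) hd
    have hRuB : Ru h σsq BW W' Q' n ≤ BW * Real.log (1 + (∑ i, ‖h n i‖ ^ 2) * Pmax / σsq n) := by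
      unfold Ru
      refine mul_le_mul_of_nonneg_left ?_ hBW.le
      refine Real.log_le_log ?_ (by linarith)
      have : 0 ≤ trR (Hmat h n) (W' n)
          / ((∑ k ∈ Finset.univ.erase n, trR (Hmat h n) (W' k))
            + trR (Hmat h n) Q' + σsq n) :=
        div_nonneg hx0 (by linarith [hσ n])
      linarith
    have hlognn : 0 ≤ BW * Real.log (1 + (∑ i, ‖h n i‖ ^ 2) * Pmax / σsq n) := by
      refine mul_nonneg hBW.le (Real.log_nonneg ?_)
      have : 0 ≤ (∑ i, ‖h n i‖ ^ 2) * Pmax / σsq n :=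
        div_nonneg (mul_nonneg hK hPmax.le) (hσ n).le
      linarith
    unfold Rsec
    refine max_le ?_ hlognn
    linarith [hRreq n]
  have hPt : Pcir ≤ Ptot φamp Pcir W' Q' := by
    unfold Ptot
    have h1 : 0 ≤ (∑ n, (Matrix.trace (W' n)).re) + (Matrix.trace Q').re := by
      have h2 : 0 ≤ ∑ n, (Matrix.trace (W' n)).re :=
        Finset.sum_nonneg fun n _ => SEEaux.trace_re_nonneg (hW'psd n)
      linarith [SEEaux.trace_re_nonneg hQ'psd]
    nlinarith [hφamp.1, one_div_pos.mpr hφamp.1]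
  calc SEE h σsq BW Rreq φamp Pcir W' Q'
      = (∑ n, Rsec h σsq BW Rreq W' Q' n) / Ptot φamp Pcir W' Q' := rfl
    _ ≤ (∑ n, Rsec h σsq BW Rreq W' Q' n) / Pcir :=
        div_le_div_of_nonneg_left hnumnn hPcir hPt
    _ ≤ (∑ n, BW * Real.log (1 + (∑ i, ‖h n i‖ ^ 2) * Pmax / σsq n)) / Pcir :=
        (div_le_div_iff_of_pos_right hPcir).mpr (Finset.sum_le_sum fun n _ => hub n)
end
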